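/- arXiv:1509.00241 — 10 statements merged into one kernel-verified Lean document; each statement's English description precedes it below -/
import Mathlib

section
/- Let A be a nonzero n×n matrix over a field F such that A^r = A^{(r)} for all integers r with 2 ≤ r ≤ n+1. Then the minimal polynomial of A factors into distinct linear factors over F; in particular A is diagonalizable over F. -/
open Polynomial Matrix

section Aux

variable {F : Type*} [Field F] [DecidableEq F]

/-- Vandermonde-type inversion: if vectors `w μ` indexed by a finite set of distinct nonzero
scalars satisfy `∑ μ^r • w μ = 0` for `r = 1, ..., card t`, then all `w μ = 0`. -/
lemma vand_aux {V : Type*} [AddCommGroup V] [Module F V] (t : Finset F)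
    (h0 : (0 : F) ∉ t) (w : F → V)
    (hw : ∀ r : ℕ, 1 ≤ r → r ≤ t.card → ∑ μ ∈ t, μ ^ r • w μ = 0) :
    ∀ μ ∈ t, w μ = 0 := by
  intro μ₀ hμ₀
  set q : F[X] := ∏ ν ∈ t.erase μ₀, (X - C ν) with hq
  have hdeg : q.natDegree < t.card := by
    have h1 : q.natDegree ≤ ∑ ν ∈ t.erase μ₀, (X - C ν).natDegree :=
      Polynomial.natDegree_prod_le _ _
    have h2 : ∑ ν ∈ t.erase μ₀, (X - C ν).natDegree = (t.erase μ₀).card := by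
      simp [Polynomial.natDegree_X_sub_C]
    have h3 : (t.erase μ₀).card < t.card := Finset.card_erase_lt_of_mem hμ₀
    omega
  have key : ∑ μ ∈ t, (μ * q.eval μ) • w μ = 0 := by
    have step : ∀ μ ∈ t, (μ * q.eval μ) • w μ
        = ∑ k ∈ Finset.range t.card, q.coeff k • (μ ^ (k + 1) • w μ) := by
      intro μ _
      rw [Polynomial.eval_eq_sum_range' hdeg μ, Finset.mul_sum, Finset.sum_smul]
      refine Finset.sum_congr rfl fun k _ => ?_
      rw [show μ * (q.coeff k * μ ^ k) = q.coeff k * μ ^ (k + 1) by ring]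
      exact mul_smul _ _ _
    rw [Finset.sum_congr rfl step, Finset.sum_comm]
    refine Finset.sum_eq_zero fun k hk => ?_
    rw [← Finset.smul_sum, hw (k + 1) (by omega) (by
      simpa using Nat.succ_le_of_lt (Finset.mem_range.1 hk)), smul_zero]
  have hsingle : ∑ μ ∈ t, (μ * q.eval μ) • w μ = (μ₀ * q.eval μ₀) • w μ₀ := by
    refine Finset.sum_eq_single_of_mem μ₀ hμ₀ fun ν hν hνμ => ?_
    have : q.eval ν = 0 := by
      rw [hq, Polynomial.eval_prod]
      exact Finset.prod_eq_zero (Finset.mem_erase.2 ⟨hνμ, hν⟩) (by simp)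
    rw [this, mul_zero, zero_smul]
  rw [hsingle] at key
  have hne : μ₀ * q.eval μ₀ ≠ 0 := by
    refine mul_ne_zero (fun h => h0 (h ▸ hμ₀)) ?_
    rw [hq, Polynomial.eval_prod]
    refine Finset.prod_ne_zero_iff.2 fun ν hν => ?_
    have : ν ≠ μ₀ := (Finset.mem_erase.1 hν).1
    simp [sub_eq_zero, this.symm]
  exact (smul_eq_zero.1 key).resolve_left hne

variable {n : ℕ}

/-- The indicator vector of the level set of a nonzero value in a column of `A` is an
eigenvector. -/
lemma eigen_col (A : Matrix (Fin n) (Fin n) F)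
    (h : ∀ r : ℕ, 2 ≤ r → r ≤ n + 1 → A ^ r = A.map (· ^ r))
    (j : Fin n) (μ : F) (hμ : μ ≠ 0) :
    A *ᵥ (fun i => if A i j = μ then (1 : F) else 0)
      = μ • (fun i => if A i j = μ then (1 : F) else 0) := by
  classical
  set t : Finset F := (Finset.univ.image fun i => A i j).erase 0 with ht
  set u : F → (Fin n → F) := fun ν i => if A i j = ν then (1 : F) else 0 with hu
  have htcard : t.card ≤ n := by
    calc t.card ≤ (Finset.univ.image fun i => A i j).card := Finset.card_erase_le
    _ ≤ (Finset.univ : Finset (Fin n)).card := Finset.card_image_le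
    _ = n := by simp
  -- powers of the column
  have hcol : ∀ r : ℕ, 1 ≤ r → r ≤ n + 1 →
      (A ^ r) *ᵥ Pi.single j 1 = fun i => (A i j) ^ r := by
    intro r h1 h2
    rcases eq_or_lt_of_le h1 with h1 | h1
    · rw [← h1, pow_one]
      funext i
      simp [Matrix.mulVec_single]
    · rw [h r h1 h2]
      funext i
      simp [Matrix.mulVec_single, Matrix.map_apply]
  have hv : ∀ r : ℕ, 1 ≤ r → r ≤ n →
      (A *ᵥ fun i => (A i j) ^ r) = fun i => (A i j) ^ (r + 1) := by
    intro r h1 h2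
    rw [← hcol r h1 (by omega), Matrix.mulVec_mulVec, ← pow_succ', hcol (r + 1) (by omega) (by omega)]
  -- decomposition of column powers into indicators
  have hdecomp : ∀ r : ℕ, 1 ≤ r →
      (fun i => (A i j) ^ r) = ∑ ν ∈ t, ν ^ r • u ν := by
    intro r h1
    funext i
    have : ∀ ν ∈ t, (ν ^ r • u ν) i = if A i j = ν then (A i j) ^ r else 0 := by
      intro ν _
      simp only [hu, Pi.smul_apply, smul_eq_mul, mul_ite, mul_one, mul_zero]
      by_cases hh : A i j = ν
      · simp [hh]
      · simp [hh]
    rw [Finset.sum_apply, Finset.sum_congr rfl this, Finset.sum_ite_eq t (A i j)]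
    by_cases hmem : A i j ∈ t
    · simp [hmem]
    · simp only [hmem, if_false]
      have : A i j = 0 := by
        by_contra hz
        exact hmem (Finset.mem_erase.2 ⟨hz, Finset.mem_image.2 ⟨i, Finset.mem_univ i, rfl⟩⟩)
      rw [this, zero_pow (by omega)]
  -- the Vandermonde argument
  have hzero : ∀ ν ∈ t, A *ᵥ u ν - ν • u ν = 0 := by
    refine vand_aux t (by simp [ht]) _ fun r h1 h2 => ?_
    have hsum : A *ᵥ (∑ ν ∈ t, ν ^ r • u ν) = ∑ ν ∈ t, A *ᵥ (ν ^ r • u ν) := by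
      have h0 := map_sum A.mulVecLin (fun ν => ν ^ r • u ν) t
      simpa only [Matrix.mulVecLin_apply] using h0
    have expand : ∑ ν ∈ t, ν ^ r • (A *ᵥ u ν - ν • u ν)
        = A *ᵥ (∑ ν ∈ t, ν ^ r • u ν) - ∑ ν ∈ t, ν ^ (r + 1) • u ν := by
      rw [hsum, ← Finset.sum_sub_distrib]
      refine Finset.sum_congr rfl fun ν _ => ?_
      rw [smul_sub, Matrix.mulVec_smul, smul_smul, ← pow_succ]
    rw [expand, ← hdecomp r h1, ← hdecomp (r + 1) (by omega), hv r h1 (le_trans h2 htcard),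
      sub_self]
  by_cases hmem : μ ∈ t
  · have := hzero μ hmem
    rw [sub_eq_zero] at this
    exact this
  · have huz : u μ = 0 := by
      funext i
      simp only [hu]
      rw [if_neg fun hc => hmem (Finset.mem_erase.2
        ⟨hμ, Finset.mem_image.2 ⟨i, Finset.mem_univ i, hc⟩⟩)]
      rfl
    show A *ᵥ u μ = μ • u μ
    rw [huz, Matrix.mulVec_zero, smul_zero]

/-- Decomposition of a column of `A` into eigen-indicator vectors. -/
lemma col_decomp (A : Matrix (Fin n) (Fin n) F) (j : Fin n) :
    (fun i => A i j) = ∑ ν ∈ (Finset.univ.image fun i => A i j).erase 0,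
      ν • (fun i => if A i j = ν then (1 : F) else 0) := by
  classical
  funext i
  set t : Finset F := (Finset.univ.image fun i => A i j).erase 0 with ht
  have : ∀ ν ∈ t, (ν • fun i => if A i j = ν then (1 : F) else 0) i
      = if A i j = ν then A i j else 0 := by
    intro ν _
    simp only [Pi.smul_apply, smul_eq_mul, mul_ite, mul_one, mul_zero]
    by_cases hh : A i j = ν
    · simp [hh]
    · simp [hh]
  rw [Finset.sum_apply, Finset.sum_congr rfl this, Finset.sum_ite_eq t (A i j)]
  by_cases hmem : A i j ∈ t
  · simp [hmem]
  · simp only [hmem, if_false]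
    by_contra hz
    exact hmem (Finset.mem_erase.2 ⟨hz,
      Finset.mem_image.2 ⟨i, Finset.mem_univ i, rfl⟩⟩)

end Aux

theorem stmt1 {n : ℕ} {F : Type*} [Field F] (A : Matrix (Fin n) (Fin n) F)
    (hA : A ≠ 0)
    (h : ∀ r : ℕ, 2 ≤ r → r ≤ n + 1 → A ^ r = A.map (· ^ r)) :
    (minpoly F A).Splits ∧ Squarefree (minpoly F A) ∧
      ∃ (P : Matrix (Fin n) (Fin n) F) (d : Fin n → F),
        IsUnit P.det ∧ A = P * Matrix.diagonal d * P⁻¹ := by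
  classical
  set f : Module.End F (Fin n → F) := Matrix.mulVecLin A with hf
  -- the finite set of scalars: 0 together with all entries of A
  set s : Finset F := insert (0 : F)
    (Finset.univ.image fun ij : Fin n × Fin n => A ij.1 ij.2) with hs
  set p : F[X] := ∏ ν ∈ s, (X - C ν) with hp
  have hcolmem : ∀ j : Fin n, ∀ ν ∈ (Finset.univ.image fun i => A i j).erase 0,
      ν ∈ s.erase 0 := by
    intro j ν hν
    obtain ⟨hν0, hνim⟩ := Finset.mem_erase.1 hν
    obtain ⟨i, _, rfl⟩ := Finset.mem_image.1 hνim
    exact Finset.mem_erase.2 ⟨hν0, Finset.mem_insert_of_mem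
      (Finset.mem_image.2 ⟨(i, j), Finset.mem_univ _, rfl⟩)⟩
  -- `q0` kills every eigen-indicator vector with nonzero eigenvalue
  set q0 : F[X] := ∏ ν ∈ s.erase 0, (X - C ν) with hq0
  have hq0kill : ∀ (j : Fin n) (ν : F), ν ∈ (Finset.univ.image fun i => A i j).erase 0 →
      (Polynomial.aeval f q0) (fun i => if A i j = ν then (1 : F) else 0) = 0 := by
    intro j ν hν
    have hνs : ν ∈ s.erase 0 := hcolmem j ν hν
    have hν0 : ν ≠ 0 := (Finset.mem_erase.1 hν).1
    have hsplit : q0 = (∏ ρ ∈ (s.erase 0).erase ν, (X - C ρ)) * (X - C ν) :=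
      (Finset.prod_erase_mul _ _ hνs).symm
    rw [hsplit, _root_.map_mul, Module.End.mul_apply]
    have heval : (Polynomial.aeval f (X - C ν))
        (fun i => if A i j = ν then (1 : F) else 0) = 0 := by
      rw [map_sub, Polynomial.aeval_X, Polynomial.aeval_C, LinearMap.sub_apply]
      have := eigen_col A h j ν hν0
      rw [sub_eq_zero]
      show f _ = _
      rw [hf]
      simpa [Matrix.mulVecLin_apply, Module.algebraMap_end_apply] using this
    rw [heval, map_zero]
  -- A satisfies p
  have hannf : Polynomial.aeval f p = 0 := by
    have hps : p = q0 * X := by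
      rw [hp, hq0, ← Finset.prod_erase_mul s _ (Finset.mem_insert_self 0 _)]
      simp
    apply LinearMap.ext
    intro x
    rw [LinearMap.zero_apply, hps, _root_.map_mul, Module.End.mul_apply, Polynomial.aeval_X]
    have hfx : f x = ∑ j, x j • (fun i => A i j) := by
      funext i
      rw [hf, Matrix.mulVecLin_apply]
      simp only [Matrix.mulVec, dotProduct, Finset.sum_apply, Pi.smul_apply, smul_eq_mul]
      exact Finset.sum_congr rfl fun j _ => mul_comm _ _
    rw [hfx, _root_.map_sum]
    refine Finset.sum_eq_zero fun j _ => ?_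
    rw [_root_.map_smul, col_decomp A j, _root_.map_sum,
      Finset.sum_congr rfl fun ν hν => by rw [_root_.map_smul, hq0kill j ν hν, smul_zero],
      Finset.sum_const_zero, smul_zero]
  have hannA : Polynomial.aeval A p = 0 := by
    have e := Matrix.toLinAlgEquiv' (R := F) (n := Fin n)
    have key : Polynomial.aeval (Matrix.toLinAlgEquiv' (R := F) (n := Fin n) A) p
        = Matrix.toLinAlgEquiv' (R := F) (n := Fin n) (Polynomial.aeval A p) :=
      Polynomial.aeval_algHom_apply (Matrix.toLinAlgEquiv' (R := F) (n := Fin n)).toAlgHom A p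
    have hAf : Matrix.toLinAlgEquiv' (R := F) (n := Fin n) A = f := rfl
    rw [hAf, hannf] at key
    exact (Matrix.toLinAlgEquiv' (R := F) (n := Fin n)).injective (by rw [← key, map_zero])
  have hpmonic : p.Monic := monic_prod_of_monic _ _ fun ν _ => monic_X_sub_C ν
  have hdvd : minpoly F A ∣ p := minpoly.dvd F A hannA
  have hsplits : p.Splits :=
    Polynomial.Splits.prod fun ν _ => Polynomial.Splits.X_sub_C _
  have hsf : Squarefree p :=
    (Polynomial.separable_prod_X_sub_C_iff'.2 fun _ _ _ _ hid => hid).squarefree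
  refine ⟨hsplits.of_dvd hpmonic.ne_zero hdvd,
    hsf.squarefree_of_dvd hdvd, ?_⟩
  -- diagonalization
  have htop : ⨆ μ : F, f.eigenspace μ = ⊤ := by
    rw [eq_top_iff]
    intro x _
    set E := ⨆ μ : F, f.eigenspace μ with hE
    have humem : ∀ (j : Fin n) (ν : F), ν ≠ 0 →
        (fun i => if A i j = ν then (1 : F) else 0) ∈ E := by
      intro j ν hν
      refine le_iSup f.eigenspace ν ?_
      rw [Module.End.mem_eigenspace_iff]
      show f _ = _
      rw [hf]
      simpa [Matrix.mulVecLin_apply] using eigen_col A h j ν hν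
    set y : Fin n → F := ∑ j, x j • ∑ ν ∈ (Finset.univ.image fun i => A i j).erase 0,
      (fun i => if A i j = ν then (1 : F) else 0) with hy
    have hyE : y ∈ E := by
      refine Submodule.sum_mem _ fun j _ => Submodule.smul_mem _ _
        (Submodule.sum_mem _ fun ν hν => humem j ν (Finset.mem_erase.1 hν).1)
    have hfy : f y = f x := by
      rw [hy, _root_.map_sum]
      have hfx : f x = ∑ j, x j • (fun i => A i j) := by
        funext i
        rw [hf, Matrix.mulVecLin_apply]
        simp only [Matrix.mulVec, dotProduct, Finset.sum_apply, Pi.smul_apply, smul_eq_mul]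
        exact Finset.sum_congr rfl fun j _ => mul_comm _ _
      rw [hfx]
      refine Finset.sum_congr rfl fun j _ => ?_
      rw [_root_.map_smul, _root_.map_sum]
      congr 1
      conv_rhs => rw [col_decomp A j]
      refine Finset.sum_congr rfl fun ν hν => ?_
      show f _ = _
      rw [hf]
      simpa [Matrix.mulVecLin_apply] using eigen_col A h j ν (Finset.mem_erase.1 hν).1
    have hxy : x - y ∈ E := by
      refine le_iSup f.eigenspace 0 ?_
      rw [Module.End.mem_eigenspace_iff, zero_smul, _root_.map_sub, hfy, sub_self]
    simpa using Submodule.add_mem E hxy hyE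
  have hind : iSupIndep f.eigenspace := f.eigenspaces_iSupIndep
  have hInt : DirectSum.IsInternal f.eigenspace :=
    (DirectSum.isInternal_submodule_iff_iSupIndep_and_iSup_eq_top _).2 ⟨hind, htop⟩
  let b0 := hInt.collectedBasis fun μ => Module.Free.chooseBasis F (f.eigenspace μ)
  let e := b0.indexEquiv (Pi.basisFun F (Fin n))
  let b := b0.reindex e
  let d : Fin n → F := fun k => (e.symm k).1
  have heig : ∀ k, f (b k) = d k • b k := by
    intro k
    have hmem : (b k : Fin n → F) ∈ f.eigenspace (d k) := by
      rw [show b k = b0 (e.symm k) from b0.reindex_apply e k]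
      exact hInt.collectedBasis_mem _ _
    exact Module.End.mem_eigenspace_iff.1 hmem
  let P : Matrix (Fin n) (Fin n) F := (Pi.basisFun F (Fin n)).toMatrix ⇑b
  have hPentry : ∀ i k, P i k = b k i := by
    intro i k
    simp [P, Module.Basis.toMatrix_apply]
  have hPinv : Invertible P := (Pi.basisFun F (Fin n)).invertibleToMatrix b
  have hPdet : IsUnit P.det := Matrix.isUnit_det_of_invertible P
  refine ⟨P, d, hPdet, ?_⟩
  have hAP : A * P = P * Matrix.diagonal d := by
    ext i k
    have lhs : (A * P) i k = (A *ᵥ fun j => P j k) i := by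
      simp [Matrix.mul_apply, Matrix.mulVec, dotProduct]
    have hcolb : (fun j => P j k) = (b k : Fin n → F) := by
      funext j; exact hPentry j k
    rw [lhs, hcolb]
    have : A *ᵥ (b k : Fin n → F) = d k • (b k : Fin n → F) := heig k
    rw [this]
    rw [Matrix.mul_diagonal, hPentry, Pi.smul_apply, smul_eq_mul, mul_comm]
  calc A = A * P * P⁻¹ := (Matrix.mul_nonsing_inv_cancel_right P A hPdet).symm
  _ = P * Matrix.diagonal d * P⁻¹ := by rw [hAP]
end

section
/- Let A be a nonzero n×n matrix over a field F such that A^r = A^{(r)} for all integers r with 2 ≤ r ≤ n+1. Then the set of nonzero eigenvalues of A equals the set of nonzero entries of A. -/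
open Polynomial Matrix
open scoped Classical

namespace Stmt2Aux

variable {n : ℕ} {F : Type*} [Field F]

theorem aux1 (A : Matrix (Fin n) (Fin n) F)
    (h : ∀ r : ℕ, 2 ≤ r → r ≤ n + 1 → A ^ r = A.map (· ^ r))
    (j : Fin n) (r : ℕ) (h1 : 1 ≤ r) (h2 : r ≤ n) :
    A *ᵥ (fun k => (A k j) ^ r) = fun k => (A k j) ^ (r + 1) := by
  funext i
  have key : (A ^ (r+1)) i j = (A i j) ^ (r+1) := by
    rw [h (r+1) (by omega) (by omega)]; rfl
  rcases eq_or_lt_of_le h1 with h1' | h1'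
  · subst r
    simp only [Matrix.mulVec, dotProduct, pow_one]
    have : (A ^ 2) i j = ∑ k, A i k * A k j := by
      rw [pow_two, Matrix.mul_apply]
    rw [← this, key]
  · have hr : (A ^ r) = A.map (· ^ r) := h r (by omega) (by omega)
    have : (A ^ (r+1)) i j = ∑ k, A i k * (A k j) ^ r := by
      rw [pow_succ']
      rw [Matrix.mul_apply]
      congr 1; funext k
      rw [hr]; rfl
    simp only [Matrix.mulVec, dotProduct]
    rw [← this, key]

theorem aux2 (A : Matrix (Fin n) (Fin n) F)
    (h : ∀ r : ℕ, 2 ≤ r → r ≤ n + 1 → A ^ r = A.map (· ^ r))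
    (j : Fin n) (g : F[X]) (hg0 : g.coeff 0 = 0) (hgd : g.natDegree ≤ n) :
    A *ᵥ (fun k => g.eval (A k j)) = fun k => (A k j) * g.eval (A k j) := by
  have hev : ∀ x : F, g.eval x = ∑ r ∈ Finset.range (n+1), g.coeff r * x ^ r := fun x =>
    Polynomial.eval_eq_sum_range' (by omega) x
  have e1 : (fun k => g.eval (A k j)) =
      ∑ r ∈ Finset.range (n+1), g.coeff r • (fun k => (A k j) ^ r) := by
    funext k
    rw [hev]
    simp [Finset.sum_apply]
  rw [e1]
  have e2 : A *ᵥ (∑ r ∈ Finset.range (n+1), g.coeff r • (fun k => (A k j) ^ r)) =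
      ∑ r ∈ Finset.range (n+1), g.coeff r • (A *ᵥ (fun k => (A k j) ^ r)) := by
    rw [← Matrix.mulVecLin_apply, map_sum]
    simp [Matrix.mulVecLin_apply]
  rw [e2]
  have e3 : ∀ r ∈ Finset.range (n+1),
      g.coeff r • (A *ᵥ (fun k => (A k j) ^ r)) =
      g.coeff r • (fun k => (A k j) ^ (r+1)) := by
    intro r hr
    rcases Nat.eq_zero_or_pos r with rfl | hrpos
    · rw [hg0]; simp
    · rw [aux1 A h j r hrpos (by simpa using Nat.lt_succ_iff.mp (Finset.mem_range.mp hr))]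
  rw [Finset.sum_congr rfl e3]
  funext k
  rw [hev (A k j), Finset.mul_sum]
  simp only [Finset.sum_apply, Pi.smul_apply, smul_eq_mul]
  congr 1; funext r; ring

theorem eigen (A : Matrix (Fin n) (Fin n) F)
    (h : ∀ r : ℕ, 2 ≤ r → r ≤ n + 1 → A ^ r = A.map (· ^ r))
    (j : Fin n) (μ : F) (hμ : μ ≠ 0) :
    A *ᵥ (fun k => if A k j = μ then (1:F) else 0) =
      μ • (fun k => if A k j = μ then (1:F) else 0) := by
  by_cases hex : ∃ k, A k j = μ
  · -- μ appears in column j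
    set Vj : Finset F := (Finset.univ.image fun k => A k j).erase 0 with hVj
    have hμV : μ ∈ Vj := by
      obtain ⟨k, hk⟩ := hex
      exact Finset.mem_erase.mpr ⟨hμ, Finset.mem_image.mpr ⟨k, Finset.mem_univ k, hk⟩⟩
    set g : F[X] := X * ∏ ν ∈ Vj.erase μ, (X - C ν) with hg
    have hprodne : (∏ ν ∈ Vj.erase μ, (X - C ν) : F[X]) ≠ 0 :=
      Finset.prod_ne_zero_iff.mpr fun ν _ => X_sub_C_ne_zero ν
    have hdeg : g.natDegree = Vj.card := by
      rw [hg, natDegree_mul X_ne_zero hprodne, natDegree_X, natDegree_prod _ _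
        (fun ν _ => X_sub_C_ne_zero ν)]
      simp only [natDegree_X_sub_C]
      rw [Finset.sum_const, smul_eq_mul, mul_one, Finset.card_erase_of_mem hμV]
      have : 1 ≤ Vj.card := Finset.card_pos.mpr ⟨μ, hμV⟩
      omega
    have hcard : Vj.card ≤ n := by
      calc Vj.card ≤ (Finset.univ.image fun k => A k j).card := Finset.card_erase_le
        _ ≤ (Finset.univ : Finset (Fin n)).card := Finset.card_image_le
        _ = n := by simp
    have hg0 : g.coeff 0 = 0 := by
      rw [coeff_zero_eq_eval_zero, hg]; simp
    have hgval : ∀ x : F, g.eval x = x * ∏ ν ∈ Vj.erase μ, (x - ν) := by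
      intro x; rw [hg]; simp [eval_prod]
    -- eval g at entries of column j
    have hgμ : g.eval μ ≠ 0 := by
      rw [hgval]
      refine mul_ne_zero hμ (Finset.prod_ne_zero_iff.mpr fun ν hν => ?_)
      have := (Finset.mem_erase.mp hν).1
      exact sub_ne_zero_of_ne (Ne.symm this)
    have hind : (fun k => g.eval (A k j)) =
        g.eval μ • (fun k => if A k j = μ then (1:F) else 0) := by
      funext k
      simp only [Pi.smul_apply, smul_eq_mul]
      by_cases hk : A k j = μ
      · rw [hk]; simp
      · simp only [hk, if_false, mul_zero]
        by_cases hk0 : A k j = 0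
        · rw [hgval, hk0, zero_mul]
        · have hmem : A k j ∈ Vj.erase μ := by
            refine Finset.mem_erase.mpr ⟨hk, Finset.mem_erase.mpr ⟨hk0, ?_⟩⟩
            exact Finset.mem_image.mpr ⟨k, Finset.mem_univ k, rfl⟩
          rw [hgval]
          rw [Finset.prod_eq_zero hmem (by ring)]
          ring
    have key := aux2 A h j g hg0 (hdeg ▸ hcard)
    rw [hind] at key
    rw [Matrix.mulVec_smul] at key
    have key2 : g.eval μ • (A *ᵥ fun k => if A k j = μ then (1:F) else 0) =
        g.eval μ • (μ • fun k => if A k j = μ then (1:F) else 0) := by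
      rw [key]
      funext k
      simp only [Pi.smul_apply, smul_eq_mul]
      by_cases hk : A k j = μ
      · rw [hk]; simp; ring
      · simp only [hk, if_false, mul_zero]
        have : g.eval (A k j) = 0 := by
          have := congrFun hind k
          simpa [hk] using this
        rw [this]; ring
    exact smul_right_injective _ hgμ key2
  · push_neg at hex
    have : (fun k => if A k j = μ then (1:F) else 0) = (0 : Fin n → F) := by
      funext k; simp [hex k]
    rw [this]; simp

theorem pow_mulVec_eig (A : Matrix (Fin n) (Fin n) F) (μ : F) (w : Fin n → F)
    (hw : A *ᵥ w = μ • w) (k : ℕ) : (A ^ k) *ᵥ w = μ ^ k • w := by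
  induction k with
  | zero => simp
  | succ k ih =>
    rw [pow_succ', ← Matrix.mulVec_mulVec, ih, Matrix.mulVec_smul, hw,
      smul_smul, ← pow_succ]

theorem sum_mulVec' {ι : Type*} (s : Finset ι) (M : ι → Matrix (Fin n) (Fin n) F)
    (w : Fin n → F) : (∑ i ∈ s, M i) *ᵥ w = ∑ i ∈ s, M i *ᵥ w := by
  funext x
  simp only [Matrix.mulVec, dotProduct, Finset.sum_apply, Matrix.sum_apply,
    Finset.sum_mul]
  rw [Finset.sum_comm]

theorem aeval_mulVec_eig (A : Matrix (Fin n) (Fin n) F) (μ : F) (w : Fin n → F)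
    (hw : A *ᵥ w = μ • w) (p : F[X]) :
    (Polynomial.aeval A p) *ᵥ w = p.eval μ • w := by
  rw [Polynomial.aeval_eq_sum_range, Polynomial.eval_eq_sum_range, Finset.sum_smul,
    sum_mulVec']
  refine Finset.sum_congr rfl fun r _ => ?_
  rw [Matrix.smul_mulVec, pow_mulVec_eig A μ w hw, smul_smul]

theorem col_mulVec_single (M : Matrix (Fin n) (Fin n) F) (j : Fin n) :
    M *ᵥ Pi.single j (1:F) = fun i => M i j := by
  funext i
  simp [Matrix.mulVec, dotProduct, Pi.single_apply]

end Stmt2Aux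

open Stmt2Aux in
theorem stmt2 {n : ℕ} {F : Type*} [Field F] (A : Matrix (Fin n) (Fin n) F)
    (hA : A ≠ 0)
    (h : ∀ r : ℕ, 2 ≤ r → r ≤ n + 1 → A ^ r = A.map (· ^ r)) :
    {μ : F | μ ≠ 0 ∧ (minpoly F A).IsRoot μ} =
      {μ : F | μ ≠ 0 ∧ ∃ i j, A i j = μ} := by
  ext μ
  simp only [Set.mem_setOf_eq]
  constructor
  · rintro ⟨hμ0, hroot⟩
    refine ⟨hμ0, ?_⟩
    have hn : 1 ≤ n := by
      rcases Nat.eq_zero_or_pos n with rfl | h'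
      · exact absurd (Subsingleton.elim A 0) hA
      · exact h'
    -- V = all nonzero entries
    set V : Finset F :=
      ((Finset.univ : Finset (Fin n × Fin n)).image fun p => A p.1 p.2).erase 0 with hV
    set P : F[X] := ∏ ν ∈ V, (X - C ν) with hP
    set q : F[X] := P * X ^ 2 with hq
    have haq : Polynomial.aeval A q = 0 := by
      rw [hq, _root_.map_mul, Polynomial.aeval_X_pow]
      ext i j
      have hcol : ((Polynomial.aeval A P * A ^ 2) *ᵥ Pi.single j (1:F)) i = 0 := by
        rw [← Matrix.mulVec_mulVec]
        have h2 : A ^ 2 *ᵥ Pi.single j (1:F) = fun k => (A k j) ^ 2 := by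
          rw [col_mulVec_single, h 2 le_rfl (by omega)]
          rfl
        rw [h2]
        -- decompose column square as sum of indicators
        set Vj : Finset F := (Finset.univ.image fun k => A k j).erase 0 with hVj
        have hdec : (fun k => (A k j) ^ 2) =
            ∑ ν ∈ Vj, ν ^ 2 • (fun k => if A k j = ν then (1:F) else 0) := by
          funext k
          simp only [Finset.sum_apply, Pi.smul_apply, smul_eq_mul]
          have : ∀ ν ∈ Vj, ν ^ 2 * (if A k j = ν then (1:F) else 0) =
              if A k j = ν then ν ^ 2 else 0 := by
            intro ν _; split <;> simp
          rw [Finset.sum_congr rfl this, Finset.sum_ite_eq Vj (A k j) (fun ν => ν ^ 2)]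
          by_cases hk0 : A k j = 0
          · rw [hk0]
            simp [hVj]
          · have : A k j ∈ Vj := Finset.mem_erase.mpr ⟨hk0,
              Finset.mem_image.mpr ⟨k, Finset.mem_univ k, rfl⟩⟩
            simp [this]
        rw [hdec, ← Matrix.mulVecLin_apply, map_sum]
        have hterm : ∀ ν ∈ Vj,
            (Polynomial.aeval A P).mulVecLin
              (ν ^ 2 • fun k => if A k j = ν then (1:F) else 0) = 0 := by
          intro ν hν
          have hν0 : ν ≠ 0 := (Finset.mem_erase.mp hν).1
          have hνV : ν ∈ V := by
            obtain ⟨k, -, hk⟩ := Finset.mem_image.mp (Finset.mem_erase.mp hν).2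
            exact Finset.mem_erase.mpr ⟨hν0,
              Finset.mem_image.mpr ⟨(k, j), Finset.mem_univ _, hk⟩⟩
          rw [_root_.map_smul, Matrix.mulVecLin_apply,
            aeval_mulVec_eig A ν _ (eigen A h j ν hν0)]
          have : P.eval ν = 0 := by
            rw [hP, Polynomial.eval_prod]
            exact Finset.prod_eq_zero hνV (by simp)
          rw [this]
          simp
        rw [Finset.sum_congr rfl hterm]
        simp
      simpa [col_mulVec_single] using hcol
    have hdvd : minpoly F A ∣ q := minpoly.dvd F A haq
    have hqroot : q.IsRoot μ := hroot.dvd hdvd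
    have : P.eval μ * μ ^ 2 = 0 := by
      simpa [hq] using hqroot
    have hPμ : P.eval μ = 0 := by
      rcases mul_eq_zero.mp this with h' | h'
      · exact h'
      · exact absurd (pow_eq_zero_iff (by norm_num) |>.mp h') hμ0
    rw [hP, Polynomial.eval_prod] at hPμ
    obtain ⟨ν, hνV, hν0⟩ := Finset.prod_eq_zero_iff.mp hPμ
    have hμν : μ = ν := by
      have : μ - ν = 0 := by simpa using hν0
      linear_combination this
    obtain ⟨p, -, hp⟩ := Finset.mem_image.mp (Finset.mem_erase.mp hνV).2
    exact ⟨p.1, p.2, by rw [hp, ← hμν]⟩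
  · rintro ⟨hμ0, i, j, hij⟩
    refine ⟨hμ0, ?_⟩
    have heig := eigen A h j μ hμ0
    have h0 := aeval_mulVec_eig A μ _ heig (minpoly F A)
    rw [minpoly.aeval] at h0
    have := congrFun h0.symm i
    simp only [Pi.smul_apply, smul_eq_mul, hij, if_pos rfl, Matrix.zero_mulVec,
      Pi.zero_apply, mul_one] at this
    simpa [hij] using this
end

section
/- Suppose A = Σ_{i=1}^k λ_i E_i where λ_1,…,λ_k are distinct nonzero elements of a field F, each E_i is an idempotent matrix all of whose entries lie in {0,1}, E_i E_j = 0 for i ≠ j, and the Hadamard product E_i ∘ E_j = 0 for i ≠ j. Then A^r = A^{(r)} for every positive integer r. -/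
theorem stmt3 {n k : ℕ} {F : Type*} [Field F]
    (lam : Fin k → F) (E : Fin k → Matrix (Fin n) (Fin n) F)
    (hne : ∀ i, lam i ≠ 0) (hinj : Function.Injective lam)
    (hidem : ∀ i, E i * E i = E i)
    (h01 : ∀ i a b, E i a b = 0 ∨ E i a b = 1)
    (hmul : ∀ i j, i ≠ j → E i * E j = 0)
    (hhad : ∀ i j, i ≠ j → Matrix.hadamard (E i) (E j) = 0)
    (A : Matrix (Fin n) (Fin n) F) (hA : A = ∑ i, lam i • E i) :
    ∀ r : ℕ, 1 ≤ r → A ^ r = A.map (· ^ r) := by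
  -- Step 1: A ^ r = ∑ i, lam i ^ r • E i for r ≥ 1.
  have key : ∀ r : ℕ, 1 ≤ r → A ^ r = ∑ i, lam i ^ r • E i := by
    intro r hr
    induction r with
    | zero => omega
    | succ m ih =>
      rcases Nat.eq_or_lt_of_le hr with h1 | h1
      · simp [← h1, hA]
      · have hm : 1 ≤ m := by omega
        have := ih hm
        rw [pow_succ, this, hA, Finset.sum_mul_sum]
        rw [Finset.sum_congr rfl (fun i _ => rfl)]
        have : ∀ i j : Fin k, (lam i ^ m • E i) * (lam j • E j)
            = if i = j then lam i ^ (m+1) • E i else 0 := by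
          intro i j
          by_cases hij : i = j
          · subst hij
            simp [Matrix.smul_mul, Matrix.mul_smul, hidem i, smul_smul, pow_succ, mul_comm]
          · simp [Matrix.smul_mul, Matrix.mul_smul, hmul i j hij, hij]
        calc (∑ i, ∑ j, (lam i ^ m • E i) * (lam j • E j))
            = ∑ i, ∑ j, if i = j then lam i ^ (m+1) • E i else 0 := by
              refine Finset.sum_congr rfl fun i _ => Finset.sum_congr rfl fun j _ => this i j
          _ = ∑ i, lam i ^ (m+1) • E i := by
              refine Finset.sum_congr rfl fun i _ => ?_
              simp
  intro r hr
  rw [key r hr]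
  ext a b
  simp only [Matrix.map_apply, hA, Matrix.sum_apply, Matrix.smul_apply, smul_eq_mul]
  by_cases h : ∃ j, E j a b ≠ 0
  · obtain ⟨j, hj⟩ := h
    have hj1 : E j a b = 1 := (h01 j a b).resolve_left hj
    have hz : ∀ i, i ≠ j → E i a b = 0 := by
      intro i hij
      have := congrFun (congrFun (hhad i j hij) a) b
      simp only [Matrix.hadamard_apply, Matrix.zero_apply] at this
      rw [hj1, mul_one] at this
      exact this
    rw [Finset.sum_eq_single j (fun i _ hij => by rw [hz i hij, mul_zero])
      (fun h => absurd (Finset.mem_univ j) h),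
      Finset.sum_eq_single j (fun i _ hij => by rw [hz i hij, mul_zero])
      (fun h => absurd (Finset.mem_univ j) h), hj1, mul_one, mul_one]
  · push_neg at h
    rw [Finset.sum_eq_zero (fun i _ => by rw [h i, mul_zero]),
      Finset.sum_eq_zero (fun i _ => by rw [h i, mul_zero]),
      zero_pow (by omega)]
end

section
/- Let A be a nonzero n×n matrix over a field F. Then A^r = A^{(r)} for every positive integer r if and only if A^r = A^{(r)} for every integer r ∈ {2, 3, …, n+1}. -/
open Polynomial Finset

theorem stmt4 {n : ℕ} {F : Type*} [Field F] (A : Matrix (Fin n) (Fin n) F)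
    (hA : A ≠ 0) :
    (∀ r : ℕ, 1 ≤ r → A ^ r = A.map (· ^ r)) ↔
      (∀ r : ℕ, 2 ≤ r → r ≤ n + 1 → A ^ r = A.map (· ^ r)) := by
  constructor
  · intro h r h2 _
    exact h r (le_trans one_le_two h2)
  · intro h r hr
    ext i j
    rw [Matrix.map_apply]
    set a : F := A i j with ha
    set q : F[X] := A.charpoly * (X - C a) with hq
    have hqmonic : q.Monic := (A.charpoly_monic).mul (monic_X_sub_C a)
    have hdeg : q.natDegree = n + 1 := by
      rw [hq, natDegree_mul (A.charpoly_monic).ne_zero (X_sub_C_ne_zero a),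
        A.charpoly_natDegree_eq_dim, natDegree_X_sub_C, Fintype.card_fin]
    have hq0 : Polynomial.aeval A q = 0 := by
      rw [hq, map_mul, Matrix.aeval_self_charpoly, zero_mul]
    have hqa : q.eval a = 0 := by simp [hq]
    -- matrix recurrence
    have hmat : ∀ s : ℕ, ∑ k ∈ Finset.range (n + 2), q.coeff k * (A ^ (s + k)) i j = 0 := by
      intro s
      have h1 : A ^ s * Polynomial.aeval A q = 0 := by rw [hq0, mul_zero]
      rw [Polynomial.aeval_eq_sum_range, hdeg, Finset.mul_sum] at h1
      have h2 : ∀ k, A ^ s * (q.coeff k • A ^ k) = q.coeff k • A ^ (s + k) := by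
        intro k; rw [mul_smul_comm, pow_add]
      simp only [h2] at h1
      have h3 := congrFun (congrFun h1 i) j
      simpa [Matrix.sum_apply, Matrix.smul_apply, smul_eq_mul] using h3
    -- scalar recurrence
    have hsca : ∀ s : ℕ, ∑ k ∈ Finset.range (n + 2), q.coeff k * a ^ (s + k) = 0 := by
      intro s
      have h1 : a ^ s * q.eval a = 0 := by rw [hqa, mul_zero]
      rw [Polynomial.eval_eq_sum_range, hdeg, Finset.mul_sum] at h1
      rw [← h1]
      apply Finset.sum_congr rfl
      intro k _
      rw [pow_add]; ring
    -- key claim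
    have key : ∀ m : ℕ, 1 ≤ m → (A ^ m) i j = a ^ m := by
      intro m
      induction m using Nat.strong_induction_on with
      | _ m ih =>
        intro hm
        rcases le_or_gt m (n + 1) with hle | hgt
        · rcases eq_or_lt_of_le hm with h1 | h1
          · simp [← h1, ha]
          · have := h m h1 hle
            have := congrFun (congrFun this i) j
            simpa [Matrix.map_apply] using this
        · -- m ≥ n + 2, use recurrence at shift s = m - (n+1)
          set s : ℕ := m - (n + 1) with hs
          have hs1 : 1 ≤ s := by omega
          have hsm : s + (n + 1) = m := by omega
          have hrec : ∑ k ∈ Finset.range (n + 2),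
              q.coeff k * ((A ^ (s + k)) i j - a ^ (s + k)) = 0 := by
            have := hmat s
            have := hsca s
            calc ∑ k ∈ Finset.range (n + 2), q.coeff k * ((A ^ (s + k)) i j - a ^ (s + k))
                = (∑ k ∈ Finset.range (n + 2), q.coeff k * (A ^ (s + k)) i j)
                  - ∑ k ∈ Finset.range (n + 2), q.coeff k * a ^ (s + k) := by
                  rw [← Finset.sum_sub_distrib]; apply Finset.sum_congr rfl; intros; ring
              _ = 0 := by rw [hmat s, hsca s, sub_zero]
          rw [Finset.sum_range_succ] at hrec
          have hzero : ∀ k ∈ Finset.range (n + 1),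
              q.coeff k * ((A ^ (s + k)) i j - a ^ (s + k)) = 0 := by
            intro k hk
            rw [Finset.mem_range] at hk
            have h4 : (A ^ (s + k)) i j = a ^ (s + k) := by
              apply ih (s + k) (by omega) (by omega)
            rw [h4, sub_self, mul_zero]
          rw [Finset.sum_eq_zero hzero, zero_add] at hrec
          have hlead : q.coeff (n + 1) = 1 := by
            have := hqmonic.coeff_natDegree
            rwa [hdeg] at this
          rw [hlead, one_mul, hsm, sub_eq_zero] at hrec
          exact hrec
    exact key r hr
end

section
/- Let A be a nonzero n×n matrix over a field F satisfying A^r = A^{(r)} for all integers 2 ≤ r ≤ n+1. Then there exist k ≥ 1, distinct nonzero elements λ_1,…,λ_k of F, and idempotent matrices E_1,…,E_k with entries in {0,1}, such that A = Σ λ_i E_i while E_i E_j = 0 and E_i ∘ E_j = 0 for all i ≠ j. -/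
open Matrix Finset Polynomial

private lemma vand_solve {F : Type*} [Field F] {k : ℕ} (v : Fin k → F)
    (hinj : Function.Injective v) (h0 : ∀ i, v i ≠ 0) (t : Fin k → F) :
    ∃ c : Fin k → F, ∀ i, (∑ j, c j * v i ^ (j.val + 1)) = t i := by
  classical
  set M : Matrix (Fin k) (Fin k) F := Matrix.of (fun i j => v i ^ (j.val + 1)) with hM
  have hMeq : M = Matrix.of (fun i j => v i * (Matrix.vandermonde v) i j) := by
    ext i j
    simp [hM, Matrix.vandermonde_apply, pow_succ, mul_comm]
  have hdet : M.det ≠ 0 := by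
    rw [hMeq, Matrix.det_mul_column]
    exact mul_ne_zero (Finset.prod_ne_zero_iff.2 fun i _ => h0 i)
      (Matrix.det_vandermonde_ne_zero_iff.2 hinj)
  refine ⟨M⁻¹.mulVec t, fun i => ?_⟩
  have hMt : M.mulVec (M⁻¹.mulVec t) = t := by
    rw [Matrix.mulVec_mulVec, Matrix.mul_nonsing_inv _ (Ne.isUnit hdet), Matrix.one_mulVec]
  have := congrFun hMt i
  simpa [Matrix.mulVec, dotProduct, hM, mul_comm] using this

theorem stmt5 {n : ℕ} {F : Type*} [Field F] (A : Matrix (Fin n) (Fin n) F)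
    (hA : A ≠ 0)
    (h : ∀ r : ℕ, 2 ≤ r → r ≤ n + 1 → A ^ r = A.map (· ^ r)) :
    ∃ (k : ℕ) (_ : 1 ≤ k) (lam : Fin k → F) (E : Fin k → Matrix (Fin n) (Fin n) F),
      (∀ i, lam i ≠ 0) ∧ Function.Injective lam ∧
      (∀ i, E i * E i = E i) ∧
      (∀ i a b, E i a b = 0 ∨ E i a b = 1) ∧
      (∀ i j, i ≠ j → E i * E j = 0) ∧
      (∀ i j, i ≠ j → Matrix.hadamard (E i) (E j) = 0) ∧
      A = ∑ i, lam i • E i := by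
  classical
  set E : F → Matrix (Fin n) (Fin n) F :=
    fun x => Matrix.of (fun a b => if A a b = x then (1 : F) else 0) with hEdef
  set S : Finset F :=
    ((Finset.univ : Finset (Fin n × Fin n)).image fun p => A p.1 p.2).erase 0 with hSdef
  have memS : ∀ x : F, x ∈ S ↔ x ≠ 0 ∧ ∃ a b, A a b = x := by
    intro x
    constructor
    · intro hx
      rw [hSdef] at hx
      have h1 := Finset.mem_erase.1 hx
      obtain ⟨p, -, hp⟩ := Finset.mem_image.1 h1.2
      exact ⟨h1.1, p.1, p.2, hp⟩
    · rintro ⟨hx, a, b, rfl⟩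
      rw [hSdef]
      exact Finset.mem_erase.2 ⟨hx, Finset.mem_image.2 ⟨(a, b), Finset.mem_univ _, rfl⟩⟩
  have hnotS : ∀ a b, A a b ∉ S → A a b = 0 := by
    intro a b hab
    by_contra h0
    exact hab ((memS _).2 ⟨h0, a, b, rfl⟩)
  have eval : ∀ (c : F → F) (a : Fin n) (b : Fin n),
      (∑ x ∈ S, c x • E x) a b = if A a b ∈ S then c (A a b) else 0 := by
    intro c a b
    rw [Matrix.sum_apply]
    have hterm : ∀ x ∈ S, (c x • E x) a b = if x = A a b then c x else 0 := by
      intro x hx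
      simp only [Matrix.smul_apply, hEdef, Matrix.of_apply, smul_eq_mul, mul_ite, mul_one,
        mul_zero]
      by_cases hxx : A a b = x
      · rw [if_pos hxx, if_pos hxx.symm]
      · rw [if_neg hxx, if_neg (Ne.symm hxx)]
    rw [Finset.sum_congr rfl hterm, Finset.sum_ite_eq' S (A a b) c]
  have hABentry : ∀ m : ℕ, 1 ≤ m → m ≤ n + 1 → ∀ a b, (A ^ m) a b = (A a b) ^ m := by
    intro m h1 h2 a b
    rcases eq_or_lt_of_le h1 with h1' | h1'
    · rw [← h1', pow_one, pow_one]
    · rw [h m h1' h2]; rfl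
  have star : ∀ m : ℕ, 1 ≤ m → m ≤ n + 1 → A ^ m = ∑ x ∈ S, x ^ m • E x := by
    intro m h1 h2
    ext a b
    have hv := eval (fun x => x ^ m) a b
    rw [hv, hABentry m h1 h2 a b]
    by_cases hs : A a b ∈ S
    · rw [if_pos hs]
    · rw [if_neg hs, hnotS a b hs, zero_pow (by omega)]
  have indep : ∀ g : F → F, (∑ x ∈ S, g x • E x) = 0 → ∀ x ∈ S, g x = 0 := by
    intro g hg x hx
    obtain ⟨-, a, b, rfl⟩ := (memS x).1 hx
    have hv := eval g a b
    rw [hg] at hv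
    simp only [Matrix.zero_apply] at hv
    rw [if_pos hx] at hv
    exact hv.symm
  have hSne : S.Nonempty := by
    obtain ⟨a, b, hab⟩ : ∃ a b, A a b ≠ 0 := by
      by_contra hc
      push_neg at hc
      exact hA (by ext a b; simpa using hc a b)
    exact ⟨A a b, (memS _).2 ⟨hab, a, b, rfl⟩⟩
  set k := S.card with hk
  have hk1 : 1 ≤ k := Finset.card_pos.2 hSne
  set e : Fin k → F := fun i => ((S.equivFin.symm i : S) : F) with he
  have heS : ∀ i, e i ∈ S := fun i => (S.equivFin.symm i).2
  have heinj : Function.Injective e :=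
    Subtype.val_injective.comp S.equivFin.symm.injective
  have hesurj : ∀ x ∈ S, ∃ i, e i = x := by
    intro x hx
    exact ⟨S.equivFin ⟨x, hx⟩, by simp [he]⟩
  have he0 : ∀ i, e i ≠ 0 := fun i => ((memS _).1 (heS i)).1
  -- k ≤ n via Cayley-Hamilton and root counting
  have hkn : k ≤ n := by
    by_contra hgt
    push_neg at hgt
    set q : Polynomial F := Polynomial.X * A.charpoly with hq
    have hchm : A.charpoly.Monic := A.charpoly_monic
    have hqm : q.Monic := Polynomial.monic_X.mul hchm
    have hqdeg : q.natDegree = n + 1 := by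
      rw [hq, Polynomial.natDegree_mul Polynomial.X_ne_zero hchm.ne_zero,
        Polynomial.natDegree_X, A.charpoly_natDegree_eq_dim]
      simp [add_comm]
    have hq0 : q.coeff 0 = 0 := by
      rw [hq, Polynomial.mul_coeff_zero, Polynomial.coeff_X_zero, zero_mul]
    have hqA : (Polynomial.aeval A) q = 0 := by
      rw [hq, _root_.map_mul, Matrix.aeval_self_charpoly, mul_zero]
    have hsum : (0 : Matrix (Fin n) (Fin n) F)
        = ∑ i ∈ Finset.range (n + 2), q.coeff i • A ^ i := by
      rw [← hqA, Polynomial.aeval_eq_sum_range' (by omega : q.natDegree < n + 2)]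
    have hsum2 : (0 : Matrix (Fin n) (Fin n) F)
        = ∑ x ∈ S, (∑ i ∈ Finset.range (n + 1), q.coeff (i + 1) * x ^ (i + 1)) • E x := by
      rw [hsum, Finset.sum_range_succ']
      have hzero : q.coeff 0 • A ^ 0 = 0 := by rw [hq0, zero_smul]
      rw [hzero, add_zero]
      calc ∑ i ∈ Finset.range (n + 1), q.coeff (i + 1) • A ^ (i + 1)
          = ∑ i ∈ Finset.range (n + 1), ∑ x ∈ S, (q.coeff (i + 1) * x ^ (i + 1)) • E x := by
            refine Finset.sum_congr rfl fun i hi => ?_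
            rw [star (i + 1) (by omega) (by simp at hi; omega), Finset.smul_sum]
            exact Finset.sum_congr rfl fun x _ => by rw [smul_smul]
        _ = ∑ x ∈ S, (∑ i ∈ Finset.range (n + 1), q.coeff (i + 1) * x ^ (i + 1)) • E x := by
            rw [Finset.sum_comm]
            exact Finset.sum_congr rfl fun x _ => (Finset.sum_smul).symm
    have hroot : ∀ x ∈ S, q.eval x = 0 := by
      intro x hx
      have hg := indep _ hsum2.symm x hx
      have heval : q.eval x = ∑ i ∈ Finset.range (n + 1), q.coeff (i + 1) * x ^ (i + 1) := by
        rw [Polynomial.eval_eq_sum_range' (by omega : q.natDegree < n + 2),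
          Finset.sum_range_succ']
        simp [hq0]
      rw [heval, hg]
    have hsub : insert (0 : F) S ⊆ q.roots.toFinset := by
      intro y hy
      rw [Multiset.mem_toFinset, Polynomial.mem_roots hqm.ne_zero]
      rcases Finset.mem_insert.1 hy with rfl | hyS
      · rw [Polynomial.IsRoot, ← Polynomial.coeff_zero_eq_eval_zero]; exact hq0
      · exact hroot y hyS
    have hcard : k + 1 ≤ n + 1 := by
      have h1 : (insert (0 : F) S).card = k + 1 := by
        rw [Finset.card_insert_of_notMem (fun h0 => ((memS 0).1 h0).1 rfl)]
      calc k + 1 = (insert (0 : F) S).card := h1.symm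
        _ ≤ q.roots.toFinset.card := Finset.card_le_card hsub
        _ ≤ Multiset.card q.roots := Multiset.toFinset_card_le _
        _ ≤ q.natDegree := Polynomial.card_roots' q
        _ = n + 1 := hqdeg
    omega
  -- Vandermonde coefficients for each y ∈ S
  have coeffs : ∀ y ∈ S, ∃ c : Fin k → F,
      ∀ x ∈ S, (∑ j, c j * x ^ (j.val + 1)) = if x = y then 1 else 0 := by
    intro y hy
    obtain ⟨c, hc⟩ := vand_solve e heinj he0 (fun i => if e i = y then 1 else 0)
    refine ⟨c, fun x hx => ?_⟩
    obtain ⟨i, rfl⟩ := hesurj x hx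
    exact hc i
  -- representation of E y as a polynomial in A
  have Erep : ∀ y ∈ S, ∀ c : Fin k → F,
      (∀ x ∈ S, (∑ j, c j * x ^ (j.val + 1)) = if x = y then 1 else 0) →
      E y = ∑ j : Fin k, c j • A ^ (j.val + 1) := by
    intro y hy c hc
    have hrw : ∑ j : Fin k, c j • A ^ (j.val + 1)
        = ∑ x ∈ S, (∑ j : Fin k, c j * x ^ (j.val + 1)) • E x := by
      calc ∑ j : Fin k, c j • A ^ (j.val + 1)
          = ∑ j : Fin k, ∑ x ∈ S, (c j * x ^ (j.val + 1)) • E x := by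
            refine Finset.sum_congr rfl fun j _ => ?_
            rw [star (j.val + 1) (by omega) (by have := j.2; omega), Finset.smul_sum]
            exact Finset.sum_congr rfl fun x _ => by rw [smul_smul]
        _ = ∑ x ∈ S, ∑ j : Fin k, (c j * x ^ (j.val + 1)) • E x := Finset.sum_comm
        _ = ∑ x ∈ S, (∑ j : Fin k, c j * x ^ (j.val + 1)) • E x := by
            exact Finset.sum_congr rfl fun x _ => (Finset.sum_smul).symm
    rw [hrw]
    ext a b
    have hv := eval (fun x => ∑ j : Fin k, c j * x ^ (j.val + 1)) a b
    rw [hv]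
    simp only [hEdef, Matrix.of_apply]
    by_cases hs : A a b ∈ S
    · rw [if_pos hs, hc (A a b) hs]
    · rw [if_neg hs]
      have h0 : A a b = 0 := hnotS a b hs
      rw [if_neg (by rw [h0]; exact fun hy0 => ((memS y).1 hy).1 hy0.symm)]
  have hAE : ∀ y ∈ S, A * E y = y • E y := by
    intro y hy
    obtain ⟨c, hc⟩ := coeffs y hy
    have hterm : ∀ j : Fin k, A * (c j • A ^ (j.val + 1)) = c j • A ^ (j.val + 2) := by
      intro j
      rw [Matrix.mul_smul]
      congr 1
      rw [← pow_succ']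
    have hrw : ∑ j : Fin k, c j • A ^ (j.val + 2)
        = ∑ x ∈ S, (∑ j : Fin k, c j * x ^ (j.val + 2)) • E x := by
      calc ∑ j : Fin k, c j • A ^ (j.val + 2)
          = ∑ j : Fin k, ∑ x ∈ S, (c j * x ^ (j.val + 2)) • E x := by
            refine Finset.sum_congr rfl fun j _ => ?_
            rw [star (j.val + 2) (by omega) (by have := j.2; omega), Finset.smul_sum]
            exact Finset.sum_congr rfl fun x _ => by rw [smul_smul]
        _ = ∑ x ∈ S, ∑ j : Fin k, (c j * x ^ (j.val + 2)) • E x := Finset.sum_comm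
        _ = ∑ x ∈ S, (∑ j : Fin k, c j * x ^ (j.val + 2)) • E x := by
            exact Finset.sum_congr rfl fun x _ => (Finset.sum_smul).symm
    have h2 : A * E y = ∑ x ∈ S, (∑ j : Fin k, c j * x ^ (j.val + 2)) • E x := by
      conv_lhs => rw [Erep y hy c hc]
      rw [Finset.mul_sum, Finset.sum_congr rfl fun j _ => hterm j, hrw]
    rw [h2]
    ext a b
    have hv := eval (fun x => ∑ j : Fin k, c j * x ^ (j.val + 2)) a b
    rw [hv]
    simp only [Matrix.smul_apply, hEdef, Matrix.of_apply, smul_eq_mul, mul_ite, mul_one,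
      mul_zero]
    by_cases hs : A a b ∈ S
    · rw [if_pos hs]
      have hfac : ∑ j : Fin k, c j * (A a b) ^ (j.val + 2)
          = A a b * ∑ j : Fin k, c j * (A a b) ^ (j.val + 1) := by
        rw [Finset.mul_sum]
        exact Finset.sum_congr rfl fun j _ => by ring
      rw [hfac, hc (A a b) hs]
      by_cases hab : A a b = y
      · rw [if_pos hab, if_pos hab, mul_one, hab]
      · rw [if_neg hab, if_neg hab, mul_zero]
    · rw [if_neg hs]
      have h0 : A a b = 0 := hnotS a b hs
      rw [if_neg (by rw [h0]; exact fun hy0 => ((memS y).1 hy).1 hy0.symm)]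
  have hpowE : ∀ y ∈ S, ∀ m : ℕ, A ^ m * E y = y ^ m • E y := by
    intro y hy m
    induction m with
    | zero => simp
    | succ m ih =>
      rw [pow_succ', Matrix.mul_assoc, ih, Matrix.mul_smul, hAE y hy, smul_smul, ← pow_succ]
  have hEE : ∀ x ∈ S, ∀ y ∈ S, E x * E y = (if y = x then (1 : F) else 0) • E y := by
    intro x hx y hy
    obtain ⟨c, hc⟩ := coeffs x hx
    rw [Erep x hx c hc, Finset.sum_mul]
    have hterm : ∀ j : Fin k, (c j • A ^ (j.val + 1)) * E y
        = (c j * y ^ (j.val + 1)) • E y := by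
      intro j
      rw [Matrix.smul_mul, hpowE y hy (j.val + 1), smul_smul]
    rw [Finset.sum_congr rfl fun j _ => hterm j, ← Finset.sum_smul, hc y hy]
  -- assemble the answer
  refine ⟨k, hk1, e, fun i => E (e i), he0, heinj, ?_, ?_, ?_, ?_, ?_⟩
  · intro i
    have := hEE (e i) (heS i) (e i) (heS i)
    rwa [if_pos rfl, one_smul] at this
  · intro i a b
    by_cases hab : A a b = e i
    · right; simp [hEdef, hab]
    · left; simp [hEdef, hab]
  · intro i j hij
    have := hEE (e i) (heS i) (e j) (heS j)
    rwa [if_neg (fun hji => hij (heinj hji.symm)), zero_smul] at this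
  · intro i j hij
    ext a b
    simp only [Matrix.hadamard_apply, hEdef, Matrix.of_apply, Matrix.zero_apply]
    by_cases hab : A a b = e i
    · have hne : A a b ≠ e j := fun hj => hij (heinj (hab.symm.trans hj))
      rw [if_pos hab, if_neg hne, one_mul]
    · rw [if_neg hab, zero_mul]
  · have h1 : A = ∑ x ∈ S, x • E x := by
      have hst := star 1 le_rfl (by omega)
      calc A = A ^ 1 := (pow_one A).symm
        _ = ∑ x ∈ S, x ^ 1 • E x := hst
        _ = ∑ x ∈ S, x • E x := Finset.sum_congr rfl fun x _ => by rw [pow_one]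
    rw [h1, ← Finset.sum_coe_sort S (fun x => x • E x),
      ← Equiv.sum_comp S.equivFin.symm (fun x : S => (x : F) • E (x : F))]
end

section
/- Let E be an idempotent n×n matrix over a field F whose characteristic is zero or greater than n, with all entries in {0,1}. If E has no zero row and no zero column, then E is the identity matrix. -/
theorem stmt6 {n : ℕ} {F : Type*} [Field F]
    (hchar : ringChar F = 0 ∨ n < ringChar F)
    (E : Matrix (Fin n) (Fin n) F)
    (hidem : E * E = E)
    (h01 : ∀ i j, E i j = 0 ∨ E i j = 1)
    (hrow : ∀ i, ∃ j, E i j ≠ 0)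
    (hcol : ∀ j, ∃ i, E i j ≠ 0) :
    E = 1 := by
  classical
  have one01 : ∀ i j, E i j ≠ 0 → E i j = 1 := fun i j h => (h01 i j).resolve_left h
  -- casting facts
  have cast0 : ∀ m : ℕ, m ≤ n → (m : F) = 0 → m = 0 := by
    intro m hm h
    have hd : ringChar F ∣ m := (CharP.cast_eq_zero_iff F (ringChar F) m).mp h
    rcases hchar with h0 | hp
    · simpa [h0] using hd
    · exact Nat.eq_zero_of_dvd_of_lt hd (lt_of_le_of_lt hm hp)
  have castinj : ∀ a b : ℕ, a ≤ n → b ≤ n → (a : F) = (b : F) → a = b := by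
    intro a b ha hb hab
    rcases le_total a b with h | h
    · have : ((b - a : ℕ) : F) = 0 := by
        rw [Nat.cast_sub h, hab, sub_self]
      have := cast0 _ (le_trans (Nat.sub_le _ _) hb) this
      omega
    · have : ((a - b : ℕ) : F) = 0 := by
        rw [Nat.cast_sub h, hab, sub_self]
      have := cast0 _ (le_trans (Nat.sub_le _ _) ha) this
      omega
  -- key counting identity
  have key : ∀ i j,
      (((Finset.univ.filter (fun k => E i k = 1 ∧ E k j = 1)).card : ℕ) : F) = E i j := by
    intro i j
    have h := congrFun (congrFun hidem i) j
    rw [Matrix.mul_apply] at h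
    have : ∑ k, E i k * E k j
        = ∑ k, (if E i k = 1 ∧ E k j = 1 then (1 : F) else 0) := by
      apply Finset.sum_congr rfl
      intro k _
      rcases h01 i k with h1 | h1 <;> rcases h01 k j with h2 | h2 <;>
        simp [h1, h2]
    rw [this, Finset.sum_boole] at h
    simpa using h
  have cardle : ∀ i j, (Finset.univ.filter (fun k => E i k = 1 ∧ E k j = 1)).card ≤ n := by
    intro i j
    calc (Finset.univ.filter (fun k => E i k = 1 ∧ E k j = 1)).card
        ≤ (Finset.univ : Finset (Fin n)).card := Finset.card_filter_le _ _
      _ = n := by simp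
  -- transitivity
  have htrans : ∀ {i j k : Fin n}, E i k = 1 → E k j = 1 → E i j = 1 := by
    intro i j k h1 h2
    apply one01
    intro h0
    have hk := key i j
    rw [h0] at hk
    have hcard := cast0 _ (cardle i j) hk
    have : k ∈ Finset.univ.filter (fun k => E i k = 1 ∧ E k j = 1) := by
      simp [h1, h2]
    rw [Finset.card_eq_zero] at hcard
    simp [hcard] at this
  -- uniqueness of intermediate
  have huniq : ∀ {i j k l : Fin n}, E i k = 1 → E k j = 1 → E i l = 1 → E l j = 1 → k = l := by
    intro i j k l h1 h2 h3 h4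
    by_contra hkl
    have hij : E i j = 1 := htrans h1 h2
    have hk := key i j
    rw [hij] at hk
    have hn1 : 1 ≤ n := Nat.succ_le_of_lt i.pos
    have hcard : (Finset.univ.filter (fun k => E i k = 1 ∧ E k j = 1)).card = 1 := by
      have := castinj _ 1 (cardle i j) hn1 (by simpa using hk)
      exact this
    have hsub : ({k, l} : Finset (Fin n)) ⊆
        Finset.univ.filter (fun m => E i m = 1 ∧ E m j = 1) := by
      intro x hx
      simp only [Finset.mem_insert, Finset.mem_singleton] at hx
      rcases hx with rfl | rfl <;> simp [h1, h2, h3, h4]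
    have h2le : 2 ≤ (Finset.univ.filter (fun m => E i m = 1 ∧ E m j = 1)).card := by
      have := Finset.card_le_card hsub
      rwa [Finset.card_pair hkl] at this
    omega
  -- every vertex reaches a self-loop forward
  have hsucc : ∀ i : Fin n, ∃ t, E i t = 1 ∧ E t t = 1 := by
    intro i
    choose s hs using hrow
    have hs1 : ∀ i, E i (s i) = 1 := fun i => one01 _ _ (hs i)
    have chain : ∀ m (i : Fin n), E i (s^[m + 1] i) = 1 := by
      intro m
      induction m with
      | zero => intro i; simpa using hs1 i
      | succ m ih =>
        intro i
        have h2 : E (s i) (s^[m + 1] (s i)) = 1 := ih (s i)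
        have := htrans (hs1 i) h2
        rwa [← Function.iterate_succ_apply] at this
    obtain ⟨a, b, hab, heq⟩ :=
      Fintype.exists_ne_map_eq_of_card_lt (fun m : Fin (n + 1) => s^[(m : ℕ)] i) (by simp)
    rcases Ne.lt_or_gt hab with h | h
    · -- a < b
      set t := s^[(a : ℕ)] i with ht
      have hba : (b : ℕ) = ((b : ℕ) - (a : ℕ) - 1 + 1) + (a : ℕ) := by omega
      have hloop : E t t = 1 := by
        have : s^[((b : ℕ) - (a : ℕ) - 1 + 1)] t = t := by
          rw [ht, ← Function.iterate_add_apply, ← hba]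
          exact heq.symm.trans ht
        have hc := chain ((b : ℕ) - (a : ℕ) - 1) t
        rwa [this] at hc
      rcases Nat.eq_zero_or_pos (a : ℕ) with h0 | h0
      · have hti : t = i := by rw [ht, h0]; simp
        refine ⟨t, ?_, hloop⟩
        rw [hti] at hloop ⊢
        exact hloop
      · refine ⟨t, ?_, hloop⟩
        have := chain ((a : ℕ) - 1) i
        rwa [show (a : ℕ) - 1 + 1 = (a : ℕ) by omega] at this
    · -- b < a : symmetric
      set t := s^[(b : ℕ)] i with ht
      have hba : (a : ℕ) = ((a : ℕ) - (b : ℕ) - 1 + 1) + (b : ℕ) := by omega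
      have hloop : E t t = 1 := by
        have : s^[((a : ℕ) - (b : ℕ) - 1 + 1)] t = t := by
          rw [ht, ← Function.iterate_add_apply, ← hba]
          exact heq.trans ht
        have hc := chain ((a : ℕ) - (b : ℕ) - 1) t
        rwa [this] at hc
      rcases Nat.eq_zero_or_pos (b : ℕ) with h0 | h0
      · have hti : t = i := by rw [ht, h0]; simp
        refine ⟨t, ?_, hloop⟩
        rw [hti] at hloop ⊢
        exact hloop
      · refine ⟨t, ?_, hloop⟩
        have := chain ((b : ℕ) - 1) i
        rwa [show (b : ℕ) - 1 + 1 = (b : ℕ) by omega] at this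
  -- every vertex is reached from a self-loop backward
  have hpred : ∀ j : Fin n, ∃ u, E u j = 1 ∧ E u u = 1 := by
    intro j
    choose p hp using hcol
    have hp1 : ∀ j, E (p j) j = 1 := fun j => one01 _ _ (hp j)
    have chain : ∀ m (j : Fin n), E (p^[m + 1] j) j = 1 := by
      intro m
      induction m with
      | zero => intro j; simpa using hp1 j
      | succ m ih =>
        intro j
        have h2 : E (p^[m + 1] (p j)) (p j) = 1 := ih (p j)
        have := htrans h2 (hp1 j)
        rwa [← Function.iterate_succ_apply] at this
    obtain ⟨a, b, hab, heq⟩ :=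
      Fintype.exists_ne_map_eq_of_card_lt (fun m : Fin (n + 1) => p^[(m : ℕ)] j) (by simp)
    rcases Ne.lt_or_gt hab with h | h
    · set t := p^[(a : ℕ)] j with ht
      have hba : (b : ℕ) = ((b : ℕ) - (a : ℕ) - 1 + 1) + (a : ℕ) := by omega
      have hloop : E t t = 1 := by
        have : p^[((b : ℕ) - (a : ℕ) - 1 + 1)] t = t := by
          rw [ht, ← Function.iterate_add_apply, ← hba]
          exact heq.symm.trans ht
        have hc := chain ((b : ℕ) - (a : ℕ) - 1) t
        rwa [this] at hc
      rcases Nat.eq_zero_or_pos (a : ℕ) with h0 | h0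
      · have hti : t = j := by rw [ht, h0]; simp
        refine ⟨t, ?_, hloop⟩
        rw [hti] at hloop ⊢
        exact hloop
      · refine ⟨t, ?_, hloop⟩
        have := chain ((a : ℕ) - 1) j
        rwa [show (a : ℕ) - 1 + 1 = (a : ℕ) by omega] at this
    · set t := p^[(b : ℕ)] j with ht
      have hba : (a : ℕ) = ((a : ℕ) - (b : ℕ) - 1 + 1) + (b : ℕ) := by omega
      have hloop : E t t = 1 := by
        have : p^[((a : ℕ) - (b : ℕ) - 1 + 1)] t = t := by
          rw [ht, ← Function.iterate_add_apply, ← hba]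
          exact heq.trans ht
        have hc := chain ((a : ℕ) - (b : ℕ) - 1) t
        rwa [this] at hc
      rcases Nat.eq_zero_or_pos (b : ℕ) with h0 | h0
      · have hti : t = j := by rw [ht, h0]; simp
        refine ⟨t, ?_, hloop⟩
        rw [hti] at hloop ⊢
        exact hloop
      · refine ⟨t, ?_, hloop⟩
        have := chain ((b : ℕ) - 1) j
        rwa [show (b : ℕ) - 1 + 1 = (b : ℕ) by omega] at this
  -- reflexivity
  have hrefl : ∀ i, E i i = 1 := by
    intro i
    obtain ⟨t, hit, htt⟩ := hsucc i
    obtain ⟨u, hui, huu⟩ := hpred i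
    have hut : E u t = 1 := htrans hui hit
    have h1 : i = t := huniq hui hit hut htt
    rw [h1]; exact htt
  -- conclusion
  ext i j
  by_cases hij : i = j
  · subst hij
    simp [Matrix.one_apply, hrefl i]
  · rw [Matrix.one_apply_ne hij]
    rcases h01 i j with h | h
    · exact h
    · exact absurd (huniq (hrefl i) h h (hrefl j)) hij
end

section
/- Let E be an idempotent n×n matrix of rank m ≥ 1 over a field F of characteristic zero or greater than n, with all entries in {0,1}. Then there exists a permutation matrix P such that P E P^T is the product of the n×m block matrix [I; 0; V; 0]^T arrangement (columns: identity I_m on top, then 0, then V, then 0) with the m×n block matrix [I U 0 0], where U and V are (0,1)-matrices, U has no zero column, V has no zero row, and VU is also a (0,1)-matrix. -/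
open Finset in
lemma aux_path_exists {n : ℕ} (M : Matrix (Fin n) (Fin n) ℕ) :
    ∀ (k : ℕ) (i j : Fin n), (M ^ k) i j ≠ 0 →
      ∃ v : ℕ → Fin n, v 0 = i ∧ v k = j ∧ ∀ l < k, M (v l) (v (l + 1)) ≠ 0 := by
  intro k
  induction k with
  | zero =>
    intro i j h
    rw [pow_zero] at h
    have hij : i = j := by
      by_contra hne
      simp [Matrix.one_apply, hne] at h
    exact ⟨fun _ => i, rfl, hij ▸ rfl, fun l hl => absurd hl (Nat.not_lt_zero l)⟩
  | succ k ih =>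
    intro i j h
    rw [pow_succ, Matrix.mul_apply] at h
    obtain ⟨t, -, ht⟩ := Finset.exists_ne_zero_of_sum_ne_zero h
    have h1 : (M ^ k) i t ≠ 0 := fun h0 => ht (by simp [h0])
    have h2 : M t j ≠ 0 := fun h0 => ht (by simp [h0])
    obtain ⟨v, hv0, hvk, hve⟩ := ih i t h1
    refine ⟨fun l => if l ≤ k then v l else j, by simp [hv0], by simp, ?_⟩
    intro l hl
    rcases Nat.lt_succ_iff_lt_or_eq.mp hl with hl' | rfl
    · have : l ≤ k := hl'.le
      have : l + 1 ≤ k := hl'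
      simp only [if_pos ‹l ≤ k›, if_pos ‹l + 1 ≤ k›]
      exact hve l hl'
    · simp only [le_refl, if_pos, Nat.lt_irrefl]
      rw [if_neg (by omega), hvk]
      exact h2

lemma aux_path_pow {n : ℕ} (M : Matrix (Fin n) (Fin n) ℕ) (v : ℕ → Fin n) :
    ∀ (d a : ℕ), (∀ l, a ≤ l → l < a + d → M (v l) (v (l + 1)) ≠ 0) →
      (M ^ d) (v a) (v (a + d)) ≠ 0 := by
  intro d
  induction d with
  | zero => intro a _; simp [Matrix.one_apply]
  | succ d ih =>
    intro a he
    have h1 : (M ^ d) (v a) (v (a + d)) ≠ 0 := ih a (fun l h1 h2 => he l h1 (by omega))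
    have h2 : M (v (a + d)) (v (a + d + 1)) ≠ 0 := he _ (by omega) (by omega)
    rw [pow_succ, Matrix.mul_apply]
    intro h0
    rw [Finset.sum_eq_zero_iff] at h0
    have := h0 (v (a + d)) (Finset.mem_univ _)
    rw [Nat.mul_eq_zero] at this
    have : a + (d + 1) = a + d + 1 := by omega
    rw [this] at *
    tauto

lemma aux_pow_stab {n : ℕ} (M : Matrix (Fin n) (Fin n) ℕ) (h3 : M * M * M = M * M) :
    ∀ k, M ^ (k + 2) = M ^ 2 := by
  intro k
  induction k with
  | zero => rfl
  | succ k ih =>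
    have : M ^ (k + 1 + 2) = M ^ (k + 2) * M := by rw [pow_succ]
    rw [this, ih, pow_two, h3]

lemma aux_sq_zero {n : ℕ} (M : Matrix (Fin n) (Fin n) ℕ) (h3 : M * M * M = M * M)
    (hd : ∀ i, M i i = 0) (hd2 : ∀ i, (M * M) i i = 0) : M * M = 0 := by
  ext i j
  by_contra hij
  rw [Matrix.zero_apply] at hij
  have hpow : (M ^ (n + 2)) i j ≠ 0 := by
    rw [aux_pow_stab M h3 n, pow_two]; exact hij
  obtain ⟨v, hv0, hvk, hve⟩ := aux_path_exists M (n + 2) i j hpow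
  have key : ∀ a b : ℕ, a < b → b ≤ n + 2 → v a = v b → False := by
    intro a b hab hb heq
    have hedges : ∀ l, a ≤ l → l < a + (b - a) → M (v l) (v (l + 1)) ≠ 0 := by
      intro l h1 h2; exact hve l (by omega)
    have hne := aux_path_pow M v (b - a) a hedges
    have hba : a + (b - a) = b := by omega
    rw [hba, ← heq] at hne
    rcases Nat.lt_or_ge (b - a) 2 with hlt | hge
    · have : b - a = 1 := by omega
      rw [this, pow_one] at hne
      exact hne (hd _)
    · obtain ⟨d, hd'⟩ : ∃ d, b - a = d + 2 := ⟨b - a - 2, by omega⟩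
      rw [hd', aux_pow_stab M h3 d, pow_two] at hne
      exact hne (hd2 _)
  have hcard : Fintype.card (Fin n) < Fintype.card (Fin (n + 3)) := by simp only [Fintype.card_fin]; omega
  obtain ⟨a, b, hne, heq⟩ := Fintype.exists_ne_map_eq_of_card_lt
    (fun l : Fin (n + 3) => v l.val) hcard
  rcases Ne.lt_or_gt hne with h | h
  · exact key a.val b.val h (by omega) heq
  · exact key b.val a.val h (by omega) heq.symm

theorem stmt7 {n : ℕ} {F : Type*} [Field F]
    (hchar : ringChar F = 0 ∨ n < ringChar F)
    (E : Matrix (Fin n) (Fin n) F)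
    (hidem : E * E = E)
    (h01 : ∀ i j, E i j = 0 ∨ E i j = 1)
    (m : ℕ) (hm : 1 ≤ m) (hrank : E.rank = m) :
    ∃ (s t q : ℕ) (e : Fin n ≃ (Fin m ⊕ Fin s) ⊕ (Fin t ⊕ Fin q))
      (U : Matrix (Fin m) (Fin s) F) (V : Matrix (Fin t) (Fin m) F),
      (∀ i j, U i j = 0 ∨ U i j = 1) ∧
      (∀ i j, V i j = 0 ∨ V i j = 1) ∧
      (∀ j, ∃ i, U i j ≠ 0) ∧
      (∀ i, ∃ j, V i j ≠ 0) ∧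
      (∀ i j, (V * U) i j = 0 ∨ (V * U) i j = 1) ∧
      E.submatrix e.symm e.symm =
        Matrix.fromBlocks (Matrix.fromBlocks 1 U 0 0) 0
          (Matrix.fromBlocks V (V * U) 0 0) 0 := by
  classical
  have hn : 1 ≤ n := by
    have h := E.rank_le_card_width
    rw [hrank, Fintype.card_fin] at h
    omega
  set N : Matrix (Fin n) (Fin n) ℕ := fun i j => if E i j = 1 then 1 else 0 with hNdef
  have hNE : ∀ i j, E i j = (N i j : F) := by
    intro i j
    rcases h01 i j with h | h <;> simp [hNdef, h]
  have hN1 : ∀ i j, N i j ≤ 1 := by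
    intro i j; simp only [hNdef]; split <;> omega
  have castinj : ∀ a b : ℕ, a ≤ n → b ≤ n → ((a : F) = (b : F)) → a = b := by
    intro a b ha hb hab
    haveI := ringChar.charP F
    have h := (CharP.natCast_eq_natCast F (ringChar F)).mp hab
    unfold Nat.ModEq at h
    rcases hchar with h0 | hlt
    · rw [h0, Nat.mod_zero, Nat.mod_zero] at h; exact h
    · rw [Nat.mod_eq_of_lt (by omega), Nat.mod_eq_of_lt (by omega)] at h; exact h
  have hNmul : N * N = N := by
    ext i j
    apply castinj
    · rw [Matrix.mul_apply]
      calc ∑ k, N i k * N k j ≤ ∑ _k : Fin n, 1 :=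
            Finset.sum_le_sum fun k _ => mul_le_one' (hN1 i k) (hN1 k j)
        _ = n := by simp
    · exact (hN1 i j).trans hn
    · rw [Matrix.mul_apply]
      push_cast
      simp_rw [← hNE]
      rw [← Matrix.mul_apply, hidem, hNE]
  -- pure ℕ combinatorics
  have hsum : ∀ i j, ∑ k, N i k * N k j = N i j := fun i j => by
    rw [← Matrix.mul_apply, hNmul]
  have L0 : ∀ i, N i i = 0 → ∀ k, N i k * N k i = 0 := by
    intro i h k
    have hs := hsum i i
    rw [h] at hs
    exact (Finset.sum_eq_zero_iff.mp hs) k (Finset.mem_univ _)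
  have L1 : ∀ i j, N i i = 1 → N j j = 1 → i ≠ j → N i j = 0 := by
    intro i j hi hj hij
    by_contra h0
    have hone : N i j = 1 := by have := hN1 i j; omega
    have key := Finset.sum_le_sum_of_subset (f := fun k => N i k * N k j)
      (Finset.subset_univ ({i, j} : Finset (Fin n)))
    rw [Finset.sum_pair hij, hsum i j, hi, hj, hone] at key
    omega
  have sumRowA : ∀ i j, N i i = 1 →
      ∑ k ∈ Finset.univ.filter (fun k => N k k = 1), N i k * N k j = N i j := by
    intro i j hi
    rw [Finset.sum_eq_single_of_mem i (by simp [hi])]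
    · rw [hi, one_mul]
    · intro b hb hbi
      rw [L1 i b hi (Finset.mem_filter.mp hb).2 (Ne.symm hbi), zero_mul]
  have sumColA : ∀ i j, N j j = 1 →
      ∑ k ∈ Finset.univ.filter (fun k => N k k = 1), N i k * N k j = N i j := by
    intro i j hj
    rw [Finset.sum_eq_single_of_mem j (by simp [hj])]
    · rw [hj, mul_one]
    · intro b hb hbj
      rw [L1 b j (Finset.mem_filter.mp hb).2 hj hbj, mul_zero]
  have L2' : ∀ i k j, N i i = 1 → N k k ≠ 1 → N i k * N k j = 0 := by
    intro i k j hi hk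
    have hsplit := Finset.sum_filter_add_sum_filter_not Finset.univ
      (fun k => N k k = 1) (fun k => N i k * N k j)
    rw [hsum i j, sumRowA i j hi] at hsplit
    have h0 : ∑ k ∈ Finset.univ.filter (fun k => ¬ N k k = 1), N i k * N k j = 0 := by omega
    exact (Finset.sum_eq_zero_iff.mp h0) k (by simp [hk])
  have L34 : ∀ i k j, N j j = 1 → N k k ≠ 1 → N i k * N k j = 0 := by
    intro i k j hj hk
    have hsplit := Finset.sum_filter_add_sum_filter_not Finset.univ
      (fun k => N k k = 1) (fun k => N i k * N k j)
    rw [hsum i j, sumColA i j hj] at hsplit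
    have h0 : ∑ k ∈ Finset.univ.filter (fun k => ¬ N k k = 1), N i k * N k j = 0 := by omega
    exact (Finset.sum_eq_zero_iff.mp h0) k (by simp [hk])
  -- diagonal projections
  set d' : Fin n → ℕ := fun i => if N i i = 1 then 0 else 1 with hd'def
  set D' : Matrix (Fin n) (Fin n) ℕ := Matrix.diagonal d' with hD'def
  have hD'2 : D' * D' = D' := by
    have hdd : (fun i => d' i * d' i) = d' := by
      funext i
      by_cases h : N i i = 1 <;> simp [hd'def, h]
    rw [hD'def, Matrix.diagonal_mul_diagonal, hdd]
  have hD'D'Y : ∀ Y : Matrix (Fin n) (Fin n) ℕ, D' * (D' * Y) = D' * Y := fun Y => by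
    rw [← mul_assoc, hD'2]
  have hXentry : ∀ i j, (N * (D' * N)) i j = ∑ k, N i k * (d' k * N k j) := by
    intro i j
    rw [Matrix.mul_apply]
    congr 1
    funext k
    rw [hD'def, Matrix.diagonal_mul]
  have key1 : D' * (N * (D' * N)) = N * (D' * N) := by
    ext i j
    rw [hD'def, Matrix.diagonal_mul, ← hD'def]
    by_cases hi : N i i = 1
    · rw [hXentry, Finset.sum_eq_zero, hd'def]
      · simp [hi]
      · intro k _
        by_cases hk : N k k = 1
        · simp [hd'def, hk]
        · simp only [hd'def, if_neg hk, one_mul]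
          exact L2' i k j hi hk
    · simp [hd'def, hi]
  have key2 : (N * (D' * N)) * D' = N * (D' * N) := by
    ext i j
    rw [hD'def, Matrix.mul_diagonal, ← hD'def]
    by_cases hj : N j j = 1
    · rw [hXentry, Finset.sum_eq_zero, hd'def]
      · simp [hj]
      · intro k _
        by_cases hk : N k k = 1
        · simp [hd'def, hk]
        · simp only [hd'def, if_neg hk, one_mul]
          exact L34 i k j hj hk
    · simp [hd'def, hj]
  have hMM : (D' * (N * D')) * (D' * (N * D')) = N * (D' * N) := by
    have e1 : (D' * (N * D')) * (D' * (N * D')) = D' * ((N * (D' * N)) * D') := by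
      simp only [mul_assoc]
      rw [hD'D'Y]
    rw [e1, show D' * ((N * (D' * N)) * D') = (D' * (N * (D' * N))) * D' from
      (mul_assoc _ _ _).symm, key1, key2]
  have h1' : (D' * N) * (D' * N) = N * (D' * N) := by
    rw [mul_assoc]; exact key1
  have hXDN : (N * (D' * N)) * (D' * N) = N * (D' * N) := by
    rw [mul_assoc, h1', ← mul_assoc, hNmul]
  have hM3 : ((D' * (N * D')) * (D' * (N * D'))) * (D' * (N * D')) =
      (D' * (N * D')) * (D' * (N * D')) := by
    rw [hMM]
    rw [show (N * (D' * N)) * (D' * (N * D')) = ((N * (D' * N)) * (D' * N)) * D' by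
      simp only [mul_assoc]]
    rw [hXDN, key2]
  have hMentry : ∀ i j, (D' * (N * D')) i j = d' i * (N i j * d' j) := by
    intro i j
    rw [hD'def, Matrix.diagonal_mul, Matrix.mul_diagonal]
  have hdiag : ∀ i, (D' * (N * D')) i i = 0 := by
    intro i
    rw [hMentry]
    by_cases hi : N i i = 1
    · simp [hd'def, hi]
    · have : N i i = 0 := by have := hN1 i i; omega
      simp [this]
  have hdiag2 : ∀ i, ((D' * (N * D')) * (D' * (N * D'))) i i = 0 := by
    intro i
    rw [hMM, hXentry]
    apply Finset.sum_eq_zero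
    intro k _
    by_cases hk : N k k = 1
    · simp [hd'def, hk]
    · simp only [hd'def, if_neg hk, one_mul]
      by_cases hi : N i i = 1
      · exact L2' i k i hi hk
      · have : N i i = 0 := by have := hN1 i i; omega
        exact L0 i this k
  have hX0 : N * (D' * N) = 0 :=
    hMM.symm.trans (aux_sq_zero _ hM3 hdiag hdiag2)
  have LstarT : ∀ i j k, N k k ≠ 1 → N i k * N k j = 0 := by
    intro i j k hk
    have h0 : (N * (D' * N)) i j = 0 := by rw [hX0]; rfl
    rw [hXentry] at h0
    have := (Finset.sum_eq_zero_iff.mp h0) k (Finset.mem_univ _)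
    rw [hd'def] at this
    simp only [if_neg hk, one_mul] at this
    exact this
  have Gstar : ∀ i j, ∑ k ∈ Finset.univ.filter (fun k => N k k = 1), N i k * N k j = N i j := by
    intro i j
    have hsplit := Finset.sum_filter_add_sum_filter_not Finset.univ
      (fun k => N k k = 1) (fun k => N i k * N k j)
    rw [hsum i j] at hsplit
    have h2 : ∑ k ∈ Finset.univ.filter (fun k => ¬ N k k = 1), N i k * N k j = 0 :=
      Finset.sum_eq_zero fun k hk => LstarT i j k (by simpa using (Finset.mem_filter.mp hk).2)
    omega
  -- zero lemmas
  have zAT : ∀ a b : Fin n, N a a = 1 → N b b ≠ 1 → (∃ k, N k k = 1 ∧ N b k = 1) → N a b = 0 := by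
    rintro a b ha hb ⟨k, hk, hbk⟩
    have h := L2' a b k ha hb
    rwa [hbk, mul_one] at h
  have zAQ : ∀ a b : Fin n, N a a = 1 → ¬(∃ k, N k k = 1 ∧ N k b = 1) → N a b = 0 := by
    intro a b ha hq
    by_contra h0
    exact hq ⟨a, ha, by have := hN1 a b; omega⟩
  have hST : ∀ x : Fin n, N x x ≠ 1 → (∃ k, N k k = 1 ∧ N k x = 1) →
      (∃ k, N k k = 1 ∧ N x k = 1) → False := by
    rintro x hx ⟨k1, hk1, h1⟩ ⟨k2, hk2, h2⟩
    have h := L34 k1 x k2 hk2 hx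
    rw [h1, h2] at h
    omega
  have zS : ∀ x : Fin n, N x x ≠ 1 → (∃ k, N k k = 1 ∧ N k x = 1) → ∀ y, N x y = 0 := by
    intro x hx hex y
    have hstep : ∀ k, N k k = 1 → N x k = 0 := by
      intro k hk
      by_contra h0
      exact hST x hx hex ⟨k, hk, by have := hN1 x k; omega⟩
    rw [← Gstar x y]
    apply Finset.sum_eq_zero
    intro k hk
    rw [hstep k (Finset.mem_filter.mp hk).2, zero_mul]
  have zQ : ∀ x : Fin n, ¬(∃ k, N k k = 1 ∧ N x k = 1) → ∀ y, N x y = 0 := by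
    intro x hq y
    have hstep : ∀ k, N k k = 1 → N x k = 0 := by
      intro k hk
      by_contra h0
      exact hq ⟨k, hk, by have := hN1 x k; omega⟩
    rw [← Gstar x y]
    apply Finset.sum_eq_zero
    intro k hk
    rw [hstep k (Finset.mem_filter.mp hk).2, zero_mul]
  have zXT : ∀ x y : Fin n, N y y ≠ 1 → (∃ k, N k k = 1 ∧ N y k = 1) → N x y = 0 := by
    intro x y hy hey
    rw [← Gstar x y]
    apply Finset.sum_eq_zero
    intro k hk
    rw [zAT k y (Finset.mem_filter.mp hk).2 hy hey, mul_zero]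
  have zXQ : ∀ x y : Fin n, ¬(∃ k, N k k = 1 ∧ N k y = 1) → N x y = 0 := by
    intro x y hq
    rw [← Gstar x y]
    apply Finset.sum_eq_zero
    intro k hk
    rw [zAQ k y (Finset.mem_filter.mp hk).2 hq, mul_zero]
  -- the partition bijection
  let g : ({x : Fin n // N x x = 1} ⊕ {x : Fin n // ¬ N x x = 1 ∧ ∃ k, N k k = 1 ∧ N k x = 1}) ⊕
      ({x : Fin n // ¬ N x x = 1 ∧ ¬(∃ k, N k k = 1 ∧ N k x = 1) ∧ ∃ k, N k k = 1 ∧ N x k = 1} ⊕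
       {x : Fin n // ¬ N x x = 1 ∧ ¬(∃ k, N k k = 1 ∧ N k x = 1) ∧ ¬∃ k, N k k = 1 ∧ N x k = 1})
      → Fin n :=
    Sum.elim (Sum.elim Subtype.val Subtype.val) (Sum.elim Subtype.val Subtype.val)
  have hginj : Function.Injective g := by
    rintro ((⟨a, ha⟩ | ⟨a, ha⟩) | (⟨a, ha⟩ | ⟨a, ha⟩))
      ((⟨b, hb⟩ | ⟨b, hb⟩) | (⟨b, hb⟩ | ⟨b, hb⟩)) hab <;>
      simp only [g, Sum.elim_inl, Sum.elim_inr] at hab <;> subst hab <;>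
      first
        | rfl
        | exact absurd ha hb.1
        | exact absurd hb ha.1
        | exact absurd ha.2 hb.2.1
        | exact absurd hb.2 ha.2.1
        | exact absurd ha.2.2 hb.2.2
        | exact absurd hb.2.2 ha.2.2
  have hgsur : Function.Surjective g := by
    intro x
    by_cases h1 : N x x = 1
    · exact ⟨Sum.inl (Sum.inl ⟨x, h1⟩), rfl⟩
    · by_cases h2 : ∃ k, N k k = 1 ∧ N k x = 1
      · exact ⟨Sum.inl (Sum.inr ⟨x, ⟨h1, h2⟩⟩), rfl⟩
      · by_cases h3 : ∃ k, N k k = 1 ∧ N x k = 1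
        · exact ⟨Sum.inr (Sum.inl ⟨x, ⟨h1, h2, h3⟩⟩), rfl⟩
        · exact ⟨Sum.inr (Sum.inr ⟨x, ⟨h1, h2, h3⟩⟩), rfl⟩
  let e0 := Equiv.ofBijective g ⟨hginj, hgsur⟩
  -- rank computation
  let B : Matrix (Fin n) {x : Fin n // N x x = 1} F := fun i a => E i a.1
  let C : Matrix {x : Fin n // N x x = 1} (Fin n) F := fun a j => E a.1 j
  have hsub : ∀ (x y : Fin n), ∑ a : {z : Fin n // N z z = 1}, E x a.1 * E a.1 y = E x y := by
    intro x y
    rw [← Finset.sum_subtype (Finset.univ.filter (fun k => N k k = 1)) (by simp)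
      (fun k => E x k * E k y)]
    have hc : ∀ k ∈ Finset.univ.filter (fun k => N k k = 1),
        E x k * E k y = ((N x k * N k y : ℕ) : F) := by
      intro k _
      rw [hNE, hNE]
      push_cast
      ring
    rw [Finset.sum_congr rfl hc, ← Nat.cast_sum, Gstar, ← hNE]
  have hBC : B * C = E := by
    ext i j
    rw [Matrix.mul_apply]
    exact hsub i j
  have hCB : C * B = 1 := by
    ext a b
    rw [Matrix.mul_apply]
    have hc : ∑ j, C a j * B j b = ((∑ j, N a.1 j * N j b.1 : ℕ) : F) := by
      push_cast
      exact Finset.sum_congr rfl fun j _ => by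
        show E a.1 j * E j b.1 = _
        rw [hNE, hNE]
    rw [hc, hsum]
    have ha2 : N a.1 a.1 = 1 := a.2
    have hb2 : N b.1 b.1 = 1 := b.2
    by_cases hab : a = b
    · subst hab
      rw [ha2, Matrix.one_apply_eq, Nat.cast_one]
    · have hne : a.1 ≠ b.1 := fun h => hab (Subtype.ext h)
      rw [L1 a.1 b.1 ha2 hb2 hne, Matrix.one_apply_ne hab, Nat.cast_zero]
  have hone : (1 : Matrix {x : Fin n // N x x = 1} {x : Fin n // N x x = 1} F) = C * (E * B) := by
    rw [← hBC, Matrix.mul_assoc B C B, hCB, Matrix.mul_one, hCB]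
  have hcard1 : Fintype.card {x : Fin n // N x x = 1} ≤ m := by
    calc Fintype.card {x : Fin n // N x x = 1}
        = (1 : Matrix {x : Fin n // N x x = 1} {x : Fin n // N x x = 1} F).rank :=
          Matrix.rank_one.symm
      _ = (C * (E * B)).rank := by rw [hone]
      _ ≤ (E * B).rank := Matrix.rank_mul_le_right _ _
      _ ≤ E.rank := Matrix.rank_mul_le_left _ _
      _ = m := hrank
  have hcard2 : m ≤ Fintype.card {x : Fin n // N x x = 1} := by
    calc m = E.rank := hrank.symm
      _ = (B * C).rank := by rw [hBC]
      _ ≤ B.rank := Matrix.rank_mul_le_left _ _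
      _ ≤ Fintype.card {x : Fin n // N x x = 1} := Matrix.rank_le_card_width _
  have hcardA : Fintype.card {x : Fin n // N x x = 1} = m := le_antisymm hcard1 hcard2
  -- the equivalence
  let eA : {x : Fin n // N x x = 1} ≃ Fin m := Fintype.equivFinOfCardEq hcardA
  let eS := Fintype.equivFin {x : Fin n // ¬ N x x = 1 ∧ ∃ k, N k k = 1 ∧ N k x = 1}
  let eT := Fintype.equivFin
    {x : Fin n // ¬ N x x = 1 ∧ ¬(∃ k, N k k = 1 ∧ N k x = 1) ∧ ∃ k, N k k = 1 ∧ N x k = 1}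
  let eQ := Fintype.equivFin
    {x : Fin n // ¬ N x x = 1 ∧ ¬(∃ k, N k k = 1 ∧ N k x = 1) ∧ ¬∃ k, N k k = 1 ∧ N x k = 1}
  let e := e0.symm.trans (Equiv.sumCongr (Equiv.sumCongr eA eS) (Equiv.sumCongr eT eQ))
  have he1 : ∀ i, e.symm (Sum.inl (Sum.inl i)) = (eA.symm i).1 := fun i => rfl
  have he2 : ∀ i, e.symm (Sum.inl (Sum.inr i)) = (eS.symm i).1 := fun i => rfl
  have he3 : ∀ i, e.symm (Sum.inr (Sum.inl i)) = (eT.symm i).1 := fun i => rfl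
  have he4 : ∀ i, e.symm (Sum.inr (Sum.inr i)) = (eQ.symm i).1 := fun i => rfl
  let U : Matrix (Fin m) (Fin _) F := fun i j => E (eA.symm i).1 (eS.symm j).1
  let V : Matrix (Fin _) (Fin m) F := fun i j => E (eT.symm i).1 (eA.symm j).1
  have hVU : ∀ i j, (V * U) i j = E (eT.symm i).1 (eS.symm j).1 := by
    intro i j
    have h1 : (V * U) i j =
        ∑ a : {x : Fin n // N x x = 1}, E (eT.symm i).1 a.1 * E a.1 (eS.symm j).1 := by
      rw [Matrix.mul_apply]
      exact Equiv.sum_comp eA.symm (fun a => E (eT.symm i).1 a.1 * E a.1 (eS.symm j).1)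
    rw [h1, hsub]
  refine ⟨_, _, _, e, U, V, fun i j => h01 _ _, fun i j => h01 _ _, ?_, ?_, ?_, ?_⟩
  · -- U has no zero column
    intro j
    obtain ⟨k, hk1, hk2⟩ := (eS.symm j).2.2
    refine ⟨eA ⟨k, hk1⟩, ?_⟩
    show E (eA.symm (eA ⟨k, hk1⟩)).1 (eS.symm j).1 ≠ 0
    rw [Equiv.symm_apply_apply, hNE]
    rw [show N k (eS.symm j).1 = 1 from hk2, Nat.cast_one]
    exact one_ne_zero
  · -- V has no zero row
    intro i
    obtain ⟨k, hk1, hk2⟩ := (eT.symm i).2.2.2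
    refine ⟨eA ⟨k, hk1⟩, ?_⟩
    show E (eT.symm i).1 (eA.symm (eA ⟨k, hk1⟩)).1 ≠ 0
    rw [Equiv.symm_apply_apply, hNE]
    rw [show N (eT.symm i).1 k = 1 from hk2, Nat.cast_one]
    exact one_ne_zero
  · -- V * U is a (0,1)-matrix
    intro i j
    rw [hVU, hNE]
    have := hN1 (eT.symm i).1 (eS.symm j).1
    rcases Nat.le_one_iff_eq_zero_or_eq_one.mp this with h | h <;> rw [h] <;> simp
  · -- the block structure
    apply Matrix.ext
    intro x y
    rcases x with (i | i) | (i | i) <;> rcases y with (j | j) | (j | j)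
    · -- (A, A)
      show E ↑(eA.symm i) ↑(eA.symm j) = (1 : Matrix (Fin m) (Fin m) F) i j
      by_cases hij : i = j
      · subst hij
        rw [Matrix.one_apply_eq, hNE, show N ↑(eA.symm i) ↑(eA.symm i) = 1 from (eA.symm i).2,
          Nat.cast_one]
      · rw [Matrix.one_apply_ne hij, hNE,
          L1 _ _ (eA.symm i).2 (eA.symm j).2
            (fun h => hij (eA.symm.injective (Subtype.ext h))), Nat.cast_zero]
    · -- (A, S)
      rfl
    · -- (A, T)
      show E ↑(eA.symm i) ↑(eT.symm j) = (0 : F)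
      rw [hNE, zXT _ _ (eT.symm j).2.1 (eT.symm j).2.2.2, Nat.cast_zero]
    · -- (A, Q)
      show E ↑(eA.symm i) ↑(eQ.symm j) = (0 : F)
      rw [hNE, zXQ _ _ (eQ.symm j).2.2.1, Nat.cast_zero]
    · -- (S, A)
      show E ↑(eS.symm i) ↑(eA.symm j) = (0 : F)
      rw [hNE, zS _ (eS.symm i).2.1 (eS.symm i).2.2 _, Nat.cast_zero]
    · -- (S, S)
      show E ↑(eS.symm i) ↑(eS.symm j) = (0 : F)
      rw [hNE, zS _ (eS.symm i).2.1 (eS.symm i).2.2 _, Nat.cast_zero]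
    · -- (S, T)
      show E ↑(eS.symm i) ↑(eT.symm j) = (0 : F)
      rw [hNE, zS _ (eS.symm i).2.1 (eS.symm i).2.2 _, Nat.cast_zero]
    · -- (S, Q)
      show E ↑(eS.symm i) ↑(eQ.symm j) = (0 : F)
      rw [hNE, zS _ (eS.symm i).2.1 (eS.symm i).2.2 _, Nat.cast_zero]
    · -- (T, A)
      rfl
    · -- (T, S)
      exact (hVU i j).symm
    · -- (T, T)
      show E ↑(eT.symm i) ↑(eT.symm j) = (0 : F)
      rw [hNE, zXT _ _ (eT.symm j).2.1 (eT.symm j).2.2.2, Nat.cast_zero]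
    · -- (T, Q)
      show E ↑(eT.symm i) ↑(eQ.symm j) = (0 : F)
      rw [hNE, zXQ _ _ (eQ.symm j).2.2.1, Nat.cast_zero]
    · -- (Q, A)
      show E ↑(eQ.symm i) ↑(eA.symm j) = (0 : F)
      rw [hNE, zQ _ (eQ.symm i).2.2.2 _, Nat.cast_zero]
    · -- (Q, S)
      show E ↑(eQ.symm i) ↑(eS.symm j) = (0 : F)
      rw [hNE, zQ _ (eQ.symm i).2.2.2 _, Nat.cast_zero]
    · -- (Q, T)
      show E ↑(eQ.symm i) ↑(eT.symm j) = (0 : F)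
      rw [hNE, zQ _ (eQ.symm i).2.2.2 _, Nat.cast_zero]
    · -- (Q, Q)
      show E ↑(eQ.symm i) ↑(eQ.symm j) = (0 : F)
      rw [hNE, zQ _ (eQ.symm i).2.2.2 _, Nat.cast_zero]
end

section
/- Let F be a field of prime characteristic p and let n > p. Then the n×n matrix whose upper-left (p+1)×(p+1) block consists entirely of ones and is zero elsewhere is an idempotent (0,1)-matrix that is not equal to any matrix of the form P^T [[I, U, 0, 0],[0,0,0,0],[V, VU, 0,0],[0,0,0,0]] P with P a permutation matrix, U having no zero column, and V having no zero row. In particular it is idempotent: its square equals itself. -/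
theorem stmt8 {F : Type*} [Field F] (p n : ℕ) (hp : p.Prime)
    (hcharp : CharP F p) (hn : p < n)
    (M : Matrix (Fin n) (Fin n) F)
    (hM : M = fun i j => if i.val ≤ p ∧ j.val ≤ p then 1 else 0) :
    M * M = M ∧ (∀ i j, M i j = 0 ∨ M i j = 1) ∧
    ¬ ∃ (m s t q : ℕ) (e : Fin n ≃ (Fin m ⊕ Fin s) ⊕ (Fin t ⊕ Fin q))
        (U : Matrix (Fin m) (Fin s) F) (V : Matrix (Fin t) (Fin m) F),
        (∀ j, ∃ i, U i j ≠ 0) ∧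
        (∀ i, ∃ j, V i j ≠ 0) ∧
        M.submatrix e.symm e.symm =
          Matrix.fromBlocks (Matrix.fromBlocks 1 U 0 0) 0
            (Matrix.fromBlocks V (V * U) 0 0) 0 := by
  have hp2 : 2 ≤ p := hp.two_le
  have hn2 : 1 < n := lt_of_le_of_lt (by omega) hn
  have hcard : (Finset.filter (fun k : Fin n => k.val ≤ p) Finset.univ).card = p + 1 := by
    have : Finset.filter (fun k : Fin n => k.val ≤ p) Finset.univ
        = Finset.map (Fin.castLEEmb (by omega : p + 1 ≤ n)) Finset.univ := by
      ext k
      simp [Fin.castLEEmb, Fin.exists_iff, Fin.ext_iff]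
    simp [this]
  refine ⟨?_, ?_, ?_⟩
  · subst hM
    refine Matrix.ext fun i j => ?_
    erw [Matrix.mul_apply]; beta_reduce
    by_cases h : i.val ≤ p ∧ j.val ≤ p
    · have heach : ∀ k : Fin n,
        (if i.val ≤ p ∧ k.val ≤ p then (1:F) else 0) * (if k.val ≤ p ∧ j.val ≤ p then 1 else 0)
          = if k.val ≤ p then 1 else 0 := by
        intro k; by_cases hk : k.val ≤ p <;> simp [hk, h.1, h.2]
      rw [Finset.sum_congr rfl (fun k _ => heach k)]
      rw [Finset.sum_boole]
      simp [hcard, h]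
    · have heach : ∀ k : Fin n,
        (if i.val ≤ p ∧ k.val ≤ p then (1:F) else 0) * (if k.val ≤ p ∧ j.val ≤ p then 1 else 0)
          = 0 := by
        intro k
        by_cases h1 : i.val ≤ p <;> by_cases h2 : j.val ≤ p <;> simp_all
      rw [Finset.sum_congr rfl (fun k _ => heach k)]
      simp [h]
  · subst hM; intro i j; by_cases h : i.val ≤ p ∧ j.val ≤ p <;> simp [h]
  · rintro ⟨m, s, t, q, e, U, V, hU, hV, hEq⟩
    have h0n : 0 < n := by omega
    have h1n : 1 < n := hn2
    set a : Fin n := ⟨0, h0n⟩ with hadef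
    set b : Fin n := ⟨1, h1n⟩ with hbdef
    have ha : a.val ≤ p := by simp [hadef]
    have hb : b.val ≤ p := by simp [hbdef]; omega
    have hMab : ∀ x y : Fin n, x.val ≤ p → y.val ≤ p → M x y = 1 := by
      intro x y hx hy; subst hM; simp [hx, hy]
    have key : ∀ x y : Fin n,
        M x y = (Matrix.fromBlocks (Matrix.fromBlocks 1 U 0 0) 0
            (Matrix.fromBlocks V (V * U) 0 0) 0) (e x) (e y) := by
      intro x y
      have := congrFun (congrFun hEq (e x)) (e y)
      simpa using this
    have hdiag : ∀ x : Fin n, x.val ≤ p → ∃ k : Fin m, e x = Sum.inl (Sum.inl k) := by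
      intro x hx
      have h1 : (Matrix.fromBlocks (Matrix.fromBlocks 1 U 0 0) 0
            (Matrix.fromBlocks V (V * U) 0 0) 0) (e x) (e x) = 1 := by
        rw [← key]; exact hMab x x hx hx
      rcases hex : e x with (k | j2) | (u | v)
      · exact ⟨k, rfl⟩
      · rw [hex] at h1; simp [Matrix.fromBlocks] at h1
      · rw [hex] at h1; simp [Matrix.fromBlocks] at h1
      · rw [hex] at h1; simp [Matrix.fromBlocks] at h1
    obtain ⟨ka, hka⟩ := hdiag a ha
    obtain ⟨kb, hkb⟩ := hdiag b hb
    have h1 : (Matrix.fromBlocks (Matrix.fromBlocks 1 U 0 0) 0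
            (Matrix.fromBlocks V (V * U) 0 0) 0) (e a) (e b) = 1 := by
      rw [← key]; exact hMab a b ha hb
    rw [hka, hkb] at h1
    simp only [Matrix.fromBlocks_apply₁₁] at h1
    have hk : ka = kb := by
      by_contra hne
      rw [Matrix.one_apply_ne hne] at h1
      exact zero_ne_one h1
    have : a = b := e.injective (by rw [hka, hkb, hk])
    simp [Fin.ext_iff] at this
end

section
/- Let A be a nonzero n×n matrix over a field F of characteristic 0 or greater than n such that A^r = A^{(r)} for all positive integers r. Then there exist (0,1)-vectors u_1,…,u_m and v_1,…,v_m in F^n with u_i^T v_i = 1 and u_i^T v_j = 0 for i ≠ j, and nonzero scalars μ_1,…,μ_m ∈ F (m = rank A), such that A = Σ_{i=1}^m μ_i v_i u_i^T. -/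
open Finset
open scoped Classical

section Aux

variable {F : Type*} [Field F] {n : ℕ}

lemma cast_inj_aux (hchar : ringChar F = 0 ∨ n < ringChar F) {a b : ℕ} (ha : a ≤ n)
    (hb : b ≤ n) (hab : (a : F) = (b : F)) : a = b := by
  rcases hchar with h0 | hp
  · haveI : CharP F 0 := h0 ▸ ringChar.charP F
    haveI : CharZero F := CharP.charP_to_charZero F
    exact Nat.cast_injective hab
  · haveI : CharP F (ringChar F) := ringChar.charP F
    have hm : a ≡ b [MOD ringChar F] := (CharP.natCast_eq_natCast F (ringChar F)).mp hab
    exact hm.eq_of_lt_of_lt (lt_of_le_of_lt ha hp) (lt_of_le_of_lt hb hp)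

lemma sum01_card (f : Fin n → F) (h01 : ∀ k, f k = 0 ∨ f k = 1) :
    ∑ k, f k = ((Finset.univ.filter fun k => f k = 1).card : F) := by
  rw [← Finset.sum_filter_add_sum_filter_not Finset.univ (fun k => f k = 1) f]
  have e1 : ∑ k ∈ Finset.univ.filter (fun k => f k = 1), f k
      = (((Finset.univ.filter fun k => f k = 1).card : F)) := by
    rw [Finset.sum_congr rfl (fun k hk => (Finset.mem_filter.mp hk).2), Finset.sum_const,
      nsmul_eq_mul, mul_one]
  have e2 : ∑ k ∈ Finset.univ.filter (fun k => ¬ f k = 1), f k = 0 :=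
    Finset.sum_eq_zero fun k hk => (h01 k).resolve_right (Finset.mem_filter.mp hk).2
  rw [e1, e2, add_zero]

lemma sum01_zero (hchar : ringChar F = 0 ∨ n < ringChar F) (f : Fin n → F)
    (h01 : ∀ k, f k = 0 ∨ f k = 1) (hf : ∑ k, f k = 0) : ∀ k, f k = 0 := by
  have hcast := sum01_card f h01
  rw [hf] at hcast
  have hle : (Finset.univ.filter fun k => f k = 1).card ≤ n := by
    refine le_trans (Finset.card_filter_le _ _) ?_
    simp
  have hcard : (Finset.univ.filter fun k => f k = 1).card = 0 := by
    apply cast_inj_aux hchar hle (Nat.zero_le n)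
    rw [← hcast]
    simp
  intro k
  rcases h01 k with h | h
  · exact h
  · exfalso
    have : k ∈ Finset.univ.filter fun k => f k = 1 :=
      Finset.mem_filter.mpr ⟨Finset.mem_univ _, h⟩
    rw [Finset.card_eq_zero.mp hcard] at this
    exact absurd this (Finset.notMem_empty k)

lemma sum01_one (hchar : ringChar F = 0 ∨ n < ringChar F) (hn : 0 < n) (f : Fin n → F)
    (h01 : ∀ k, f k = 0 ∨ f k = 1) (hf : ∑ k, f k = 1) : ∃! k, f k = 1 := by
  have hcast := sum01_card f h01
  rw [hf] at hcast
  have hle : (Finset.univ.filter fun k => f k = 1).card ≤ n := by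
    refine le_trans (Finset.card_filter_le _ _) ?_
    simp
  have hcard : (Finset.univ.filter fun k => f k = 1).card = 1 := by
    apply cast_inj_aux hchar hle hn
    rw [← hcast]
    simp
  obtain ⟨a, ha⟩ := Finset.card_eq_one.mp hcard
  refine ⟨a, ?_, ?_⟩
  · have : a ∈ Finset.univ.filter fun k => f k = 1 := by rw [ha]; exact Finset.mem_singleton_self a
    exact (Finset.mem_filter.mp this).2
  · intro y hy
    have : y ∈ Finset.univ.filter fun k => f k = 1 :=
      Finset.mem_filter.mpr ⟨Finset.mem_univ _, hy⟩
    rw [ha] at this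
    exact Finset.mem_singleton.mp this

variable (E : Matrix (Fin n) (Fin n) F)

lemma prod01 (h01 : ∀ i j, E i j = 0 ∨ E i j = 1) (i k j : Fin n) :
    E i k * E k j = 0 ∨ E i k * E k j = 1 := by
  rcases h01 i k with h | h <;> rcases h01 k j with h' | h' <;> simp [h, h']

lemma path_sum (hE : E * E = E) (i j : Fin n) : ∑ k, E i k * E k j = E i j := by
  rw [← Matrix.mul_apply, hE]

lemma mul_eq_one01 (h01 : ∀ i j, E i j = 0 ∨ E i j = 1) {i k j : Fin n}
    (h : E i k * E k j = 1) : E i k = 1 ∧ E k j = 1 := by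
  rcases h01 i k with h' | h' <;> rcases h01 k j with h'' | h'' <;> simp_all

lemma path_one (hchar : ringChar F = 0 ∨ n < ringChar F)
    (h01 : ∀ i j, E i j = 0 ∨ E i j = 1) (hE : E * E = E) {i j k : Fin n}
    (hik : E i k = 1) (hkj : E k j = 1) : E i j = 1 := by
  rcases h01 i j with h0 | h1
  · exfalso
    have hs : ∑ k', E i k' * E k' j = 0 := by rw [path_sum E hE, h0]
    have := sum01_zero hchar _ (fun k' => prod01 E h01 i k' j) hs k
    rw [hik, hkj, mul_one] at this
    exact one_ne_zero this
  · exact h1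

lemma path_unique (hchar : ringChar F = 0 ∨ n < ringChar F) (hn : 0 < n)
    (h01 : ∀ i j, E i j = 0 ∨ E i j = 1) (hE : E * E = E) {i j : Fin n}
    (hij : E i j = 1) : ∃! k, E i k * E k j = 1 := by
  apply sum01_one hchar hn _ (fun k => prod01 E h01 i k j)
  rw [path_sum E hE, hij]

lemma mid_diag (hchar : ringChar F = 0 ∨ n < ringChar F) (hn : 0 < n)
    (h01 : ∀ i j, E i j = 0 ∨ E i j = 1) (hE : E * E = E) {i j k : Fin n}
    (hik : E i k = 1) (hkj : E k j = 1) : E k k = 1 := by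
  rcases h01 k k with hkk | h1
  swap
  · exact h1
  exfalso
  have hij : E i j = 1 := path_one E hchar h01 hE hik hkj
  obtain ⟨k0, hk0, huniq⟩ := path_unique E hchar hn h01 hE hij
  have hk_is' : k = k0 := huniq k (show E i k * E k j = 1 by rw [hik, hkj, mul_one])
  obtain ⟨l, hl, _⟩ := path_unique E hchar hn h01 hE hik
  obtain ⟨hil, hlk⟩ := mul_eq_one01 E h01 hl
  have hlnek : l ≠ k := by
    intro hlek
    rw [hlek, hkk] at hlk
    exact one_ne_zero hlk.symm
  have hlj : E l j = 1 := path_one E hchar h01 hE hlk hkj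
  have : l = k0 := huniq l (show E i l * E l j = 1 by rw [hil, hlj, mul_one])
  exact hlnek (this.trans hk_is'.symm)

lemma offdiag_zero (hchar : ringChar F = 0 ∨ n < ringChar F) (hn : 0 < n)
    (h01 : ∀ i j, E i j = 0 ∨ E i j = 1) (hE : E * E = E) {d d' : Fin n}
    (hd : E d d = 1) (hd' : E d' d' = 1) (hne : d ≠ d') : E d d' = 0 := by
  rcases h01 d d' with h | h
  · exact h
  exfalso
  obtain ⟨k0, _, huniq⟩ := path_unique E hchar hn h01 hE h
  have h1 : d = k0 := huniq d (show E d d * E d d' = 1 by rw [hd, h, one_mul])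
  have h2 : d' = k0 := huniq d' (show E d d' * E d' d' = 1 by rw [h, hd', mul_one])
  exact hne (h1.trans h2.symm)

lemma decomp_aux (hchar : ringChar F = 0 ∨ n < ringChar F) (hn : 0 < n)
    (h01 : ∀ i j, E i j = 0 ∨ E i j = 1) (hE : E * E = E) (i j : Fin n) :
    E i j = ∑ k, E k k * (E i k * E k j) := by
  conv_lhs => rw [← path_sum E hE i j]
  apply Finset.sum_congr rfl
  intro k _
  rcases prod01 E h01 i k j with hp | hp
  · rw [hp, mul_zero]
  · obtain ⟨hik, hkj⟩ := mul_eq_one01 E h01 hp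
    rw [mid_diag E hchar hn h01 hE hik hkj, one_mul]

end Aux

theorem stmt15 {n : ℕ} {F : Type*} [Field F]
    (hchar : ringChar F = 0 ∨ n < ringChar F)
    (A : Matrix (Fin n) (Fin n) F) (hA : A ≠ 0)
    (h : ∀ r : ℕ, 1 ≤ r → A ^ r = A.map (· ^ r)) :
    ∃ (m : ℕ) (_ : m = A.rank) (u v : Fin m → Fin n → F) (μ : Fin m → F),
      (∀ i j, u i j = 0 ∨ u i j = 1) ∧
      (∀ i j, v i j = 0 ∨ v i j = 1) ∧
      (∀ i, dotProduct (u i) (v i) = 1) ∧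
      (∀ i j, i ≠ j → dotProduct (u i) (v j) = 0) ∧
      (∀ i, μ i ≠ 0) ∧
      A = ∑ i, μ i • Matrix.vecMulVec (v i) (u i) := by
  classical
  have hn : 0 < n := by
    by_contra hc
    push_neg at hc
    have hn0 : n = 0 := by omega
    subst hn0
    apply hA
    ext i
    exact i.elim0
  set S : Finset F := ((Finset.univ : Finset (Fin n × Fin n)).image fun p => A p.1 p.2).erase 0
    with hSdef
  set E : F → Matrix (Fin n) (Fin n) F :=
    fun c => Matrix.of fun i j => if A i j = c then (1 : F) else 0 with hEdef
  have hE01 : ∀ c, ∀ i j, E c i j = 0 ∨ E c i j = 1 := by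
    intro c i j
    by_cases h' : A i j = c
    · right; simp [hEdef, h']
    · left; simp [hEdef, h']
  have hSne : ∀ c ∈ S, c ≠ 0 := fun c hc => Finset.ne_of_mem_erase hc
  have hpow : ∀ r : ℕ, 1 ≤ r → A ^ r = ∑ c ∈ S, c ^ r • E c := by
    intro r hr
    rw [h r hr]
    ext i j
    rw [Matrix.map_apply, Matrix.sum_apply]
    have hterm : ∀ c ∈ S, (c ^ r • E c) i j = if A i j = c then c ^ r else 0 := by
      intro c _
      rw [Matrix.smul_apply]
      by_cases h' : A i j = c <;> simp [hEdef, h']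
    rw [Finset.sum_congr rfl hterm, Finset.sum_ite_eq S (A i j) (fun c => c ^ r)]
    by_cases hm : A i j ∈ S
    · rw [if_pos hm]
    · rw [if_neg hm]
      have hz : A i j = 0 := by
        by_contra hz
        exact hm (Finset.mem_erase.mpr ⟨hz, Finset.mem_image.mpr ⟨(i, j), Finset.mem_univ _, rfl⟩⟩)
      rw [hz, zero_pow (by omega : r ≠ 0)]
  have hpoly : ∀ q : Polynomial F, Polynomial.eval 0 q = 0 →
      Polynomial.aeval A q = ∑ c ∈ S, (Polynomial.eval c q) • E c := by
    intro q hq0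
    have hc0 : q.coeff 0 = 0 := by rw [Polynomial.coeff_zero_eq_eval_zero, hq0]
    rw [Polynomial.aeval_eq_sum_range, Finset.sum_range_succ', pow_zero, hc0, zero_smul, add_zero]
    have hstep : ∀ i ∈ Finset.range q.natDegree,
        q.coeff (i + 1) • A ^ (i + 1) = ∑ c ∈ S, (q.coeff (i + 1) * c ^ (i + 1)) • E c := by
      intro i _
      rw [hpow (i + 1) (by omega), Finset.smul_sum]
      exact Finset.sum_congr rfl fun c _ => by rw [smul_smul]
    rw [Finset.sum_congr rfl hstep, Finset.sum_comm]
    apply Finset.sum_congr rfl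
    intro c _
    rw [← Finset.sum_smul]
    congr 1
    rw [Polynomial.eval_eq_sum_range, Finset.sum_range_succ', pow_zero, hc0, zero_mul, add_zero]
  set nodes : Finset F := insert 0 S with hnodes
  set P : F → Polynomial F := fun c => Lagrange.basis nodes id c with hP
  have hinj : Set.InjOn id (nodes : Set F) := Function.injective_id.injOn
  have hPeval_self : ∀ c ∈ S, Polynomial.eval c (P c) = 1 := by
    intro c hc
    exact Lagrange.eval_basis_self (s := nodes) (v := id) hinj (Finset.mem_insert_of_mem hc)
  have hPeval_ne : ∀ c : F, ∀ c' ∈ nodes, c ≠ c' → Polynomial.eval c' (P c) = 0 := by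
    intro c c' hc' hne
    exact Lagrange.eval_basis_of_ne (s := nodes) (v := id) (i := c) (j := c') hne hc'
  have hEP : ∀ c ∈ S, E c = Polynomial.aeval A (P c) := by
    intro c hc
    rw [hpoly (P c) (hPeval_ne c 0 (Finset.mem_insert_self 0 S) (hSne c hc))]
    rw [Finset.sum_eq_single c]
    · rw [hPeval_self c hc, one_smul]
    · intro c' hc' hne
      rw [hPeval_ne c c' (Finset.mem_insert_of_mem hc') (Ne.symm hne), zero_smul]
    · intro habs; exact absurd hc habs
  have horth : ∀ c ∈ S, ∀ c' ∈ S, E c * E c' = if c = c' then E c else 0 := by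
    intro c hc c' hc'
    have hm : E c * E c' = Polynomial.aeval A (P c * P c') := by
      rw [map_mul, hEP c hc, hEP c' hc']
    have h0 : Polynomial.eval 0 (P c * P c') = 0 := by
      rw [Polynomial.eval_mul, hPeval_ne c 0 (Finset.mem_insert_self 0 S) (hSne c hc), zero_mul]
    rw [hm, hpoly _ h0]
    by_cases hcc : c = c'
    · subst hcc
      rw [if_pos rfl, Finset.sum_eq_single c]
      · rw [Polynomial.eval_mul, hPeval_self c hc, one_mul, one_smul]
      · intro b hb hne
        rw [Polynomial.eval_mul, hPeval_ne c b (Finset.mem_insert_of_mem hb) (Ne.symm hne),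
          zero_mul, zero_smul]
      · intro habs; exact absurd hc habs
    · rw [if_neg hcc]
      apply Finset.sum_eq_zero
      intro b hb
      by_cases hcb : c = b
      · have hcb' : c' ≠ b := fun hh => hcc (hcb.trans hh.symm)
        rw [Polynomial.eval_mul, hPeval_ne c' b (Finset.mem_insert_of_mem hb) hcb', mul_zero,
          zero_smul]
      · rw [Polynomial.eval_mul, hPeval_ne c b (Finset.mem_insert_of_mem hb) hcb, zero_mul,
          zero_smul]
  have hidem : ∀ c ∈ S, E c * E c = E c := fun c hc => by rw [horth c hc c hc, if_pos rfl]
  have hA1 : A = ∑ c ∈ S, c • E c := by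
    have := hpow 1 le_rfl
    simpa using this
  set T : Finset (F × Fin n) := (S ×ˢ Finset.univ).filter (fun p => E p.1 p.2 p.2 = 1) with hT
  set m := T.card with hm
  set e : Fin m ≃ {x // x ∈ T} := T.equivFin.symm with he
  set u : Fin m → Fin n → F := fun i k => E (e i).1.1 (e i).1.2 k with hu
  set v : Fin m → Fin n → F := fun i k => E (e i).1.1 k (e i).1.2 with hv
  set μ : Fin m → F := fun i => (e i).1.1 with hμ
  have hmemT : ∀ i : Fin m, (e i).1 ∈ T := fun i => (e i).2
  have hmemS : ∀ i : Fin m, (e i).1.1 ∈ S := fun i =>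
    (Finset.mem_product.mp (Finset.mem_filter.mp (hmemT i)).1).1
  have hdiag : ∀ i : Fin m, E (e i).1.1 (e i).1.2 (e i).1.2 = 1 := fun i =>
    (Finset.mem_filter.mp (hmemT i)).2
  have hdot : ∀ i j : Fin m, dotProduct (u i) (v j)
      = (E (e i).1.1 * E (e j).1.1) (e i).1.2 (e j).1.2 := by
    intro i j
    rw [Matrix.mul_apply]
    rfl
  have hdot_self : ∀ i, dotProduct (u i) (v i) = 1 := by
    intro i
    rw [hdot i i, hidem _ (hmemS i)]
    exact hdiag i
  have hdot_ne : ∀ i j, i ≠ j → dotProduct (u i) (v j) = 0 := by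
    intro i j hij
    rw [hdot i j]
    by_cases hc : (e i).1.1 = (e j).1.1
    · have hd : (e i).1.2 ≠ (e j).1.2 := by
        intro hd
        apply hij
        apply e.injective
        exact Subtype.ext (Prod.ext hc hd)
      rw [hc, hidem _ (hmemS j)]
      refine offdiag_zero _ hchar hn (hE01 _) (hidem _ (hmemS j)) ?_ (hdiag j) hd
      rw [← hc]
      exact hdiag i
    · rw [horth _ (hmemS i) _ (hmemS j), if_neg hc]
      simp
  have hμne : ∀ i, μ i ≠ 0 := fun i => hSne _ (hmemS i)
  have hu01 : ∀ i k, u i k = 0 ∨ u i k = 1 := fun i k => hE01 _ _ _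
  have hv01 : ∀ i k, v i k = 0 ∨ v i k = 1 := fun i k => hE01 _ _ _
  have hAdecomp : A = ∑ i : Fin m, μ i • Matrix.vecMulVec (v i) (u i) := by
    have hsum : ∑ i : Fin m, μ i • Matrix.vecMulVec (v i) (u i)
        = ∑ p ∈ T, p.1 • Matrix.vecMulVec (fun k => E p.1 k p.2) (fun k => E p.1 p.2 k) := by
      rw [← Finset.sum_coe_sort T
        (fun p => p.1 • Matrix.vecMulVec (fun k => E p.1 k p.2) (fun k => E p.1 p.2 k))]
      exact Fintype.sum_equiv e _ _ (fun i => rfl)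
    rw [hsum, hT, Finset.sum_filter, Finset.sum_product, hA1]
    apply Finset.sum_congr rfl
    intro c hc
    have hEdec : E c = ∑ d, if E c d d = 1 then
        Matrix.vecMulVec (fun k => E c k d) (fun k => E c d k) else 0 := by
      ext i j
      rw [Matrix.sum_apply, decomp_aux (E c) hchar hn (hE01 c) (hidem c hc) i j]
      apply Finset.sum_congr rfl
      intro d _
      rcases hE01 c d d with h0 | h1
      · simp [h0]
      · simp [h1, Matrix.vecMulVec_apply]
    have h2 : ∀ d : Fin n, (if E c d d = 1 then
        c • Matrix.vecMulVec (fun k => E c k d) (fun k => E c d k) else 0)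
        = c • (if E c d d = 1 then
          Matrix.vecMulVec (fun k => E c k d) (fun k => E c d k) else 0) := by
      intro d
      split <;> simp
    rw [Finset.sum_congr rfl (fun d _ => h2 d), ← Finset.smul_sum, ← hEdec]
  have hvec : ∀ x : Fin n → F,
      A.mulVec x = ∑ i, (μ i * dotProduct (u i) x) • v i := by
    intro x
    conv_lhs => rw [hAdecomp]
    ext k
    simp only [Matrix.mulVec, dotProduct, Matrix.sum_apply, Matrix.smul_apply,
      Matrix.vecMulVec_apply, smul_eq_mul, Finset.sum_apply, Pi.smul_apply, Finset.sum_mul,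
      Finset.mul_sum]
    rw [Finset.sum_comm]
    apply Finset.sum_congr rfl
    intro i _
    apply Finset.sum_congr rfl
    intro l _
    ring
  have heig : ∀ i, A.mulVec (v i) = μ i • v i := by
    intro i
    rw [hvec (v i), Finset.sum_eq_single i]
    · rw [hdot_self i, mul_one]
    · intro j _ hne
      rw [hdot_ne j i hne, mul_zero, zero_smul]
    · intro habs; exact absurd (Finset.mem_univ i) habs
  have hlin : LinearIndependent F v := by
    rw [Fintype.linearIndependent_iff]
    intro g hg i
    have hsum : dotProduct (u i) (∑ j, g j • v j)
        = ∑ j, g j * dotProduct (u i) (v j) := by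
      simp only [dotProduct, Finset.sum_apply, Pi.smul_apply, smul_eq_mul,
        Finset.mul_sum]
      rw [Finset.sum_comm]
      apply Finset.sum_congr rfl
      intro j _
      apply Finset.sum_congr rfl
      intro l _
      ring
    have hval : dotProduct (u i) (∑ j, g j • v j) = g i := by
      rw [hsum, Finset.sum_eq_single i]
      · rw [hdot_self i, mul_one]
      · intro j _ hne
        rw [hdot_ne i j (Ne.symm hne), mul_zero]
      · intro habs; exact absurd (Finset.mem_univ i) habs
    rw [hg] at hval
    rw [← hval]
    simp [dotProduct]
  have hrange : LinearMap.range (Matrix.mulVecLin A) = Submodule.span F (Set.range v) := by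
    apply le_antisymm
    · rintro y ⟨x, rfl⟩
      rw [Matrix.mulVecLin_apply, hvec x]
      exact Submodule.sum_mem _ fun i _ =>
        Submodule.smul_mem _ _ (Submodule.subset_span ⟨i, rfl⟩)
    · rw [Submodule.span_le]
      rintro y ⟨i, rfl⟩
      exact ⟨(μ i)⁻¹ • v i, by
        rw [Matrix.mulVecLin_apply, Matrix.mulVec_smul, heig i, smul_smul,
          inv_mul_cancel₀ (hμne i), one_smul]⟩
  have hrank : m = A.rank := by
    have hr : A.rank = Module.finrank F (LinearMap.range (Matrix.mulVecLin A)) := rfl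
    rw [hr, hrange, finrank_span_eq_card hlin, Fintype.card_fin]
  exact ⟨m, hrank, u, v, μ, hu01, hv01, hdot_self, hdot_ne, hμne, hAdecomp⟩
end

section
/- Let A = Σ_{i=1}^m μ_i v_i u_i^T where μ_i ∈ F are nonzero, u_i, v_i ∈ F^n are (0,1)-vectors with u_i^T v_i = 1 and u_i^T v_j = 0 for all i ≠ j, and additionally the supports of the matrices v_i u_i^T are pairwise disjoint whenever μ_i ≠ μ_j is allowed (i.e., (v_i u_i^T) ∘ (v_j u_j^T) = 0 for i ≠ j). Then A^r = A^{(r)} for all positive integers r. -/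
lemma vmv_mul {n m F : Type*} [Fintype m] [Field F] (a : n → F) (b c : m → F) (d : n → F) :
    Matrix.vecMulVec a b * Matrix.vecMulVec c d
      = dotProduct b c • Matrix.vecMulVec a d := by
  ext i j
  simp only [Matrix.mul_apply, Matrix.vecMulVec_apply, Matrix.smul_apply, smul_eq_mul,
    dotProduct, Finset.sum_mul, Finset.mul_sum]
  apply Finset.sum_congr rfl
  intros; ring

theorem stmt16 {n m : ℕ} {F : Type*} [Field F]
    (u v : Fin m → Fin n → F) (μ : Fin m → F)
    (hu : ∀ i j, u i j = 0 ∨ u i j = 1)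
    (hv : ∀ i j, v i j = 0 ∨ v i j = 1)
    (hμ : ∀ i, μ i ≠ 0)
    (hii : ∀ i, dotProduct (u i) (v i) = 1)
    (hij : ∀ i j, i ≠ j → dotProduct (u i) (v j) = 0)
    (hhad : ∀ i j, i ≠ j →
      Matrix.hadamard (Matrix.vecMulVec (v i) (u i)) (Matrix.vecMulVec (v j) (u j)) = 0)
    (A : Matrix (Fin n) (Fin n) F)
    (hA : A = ∑ i, μ i • Matrix.vecMulVec (v i) (u i)) :
    ∀ r : ℕ, 1 ≤ r → A ^ r = A.map (· ^ r) := by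
  have key : ∀ r : ℕ, 1 ≤ r → A ^ r = ∑ i, (μ i ^ r) • Matrix.vecMulVec (v i) (u i) := by
    intro r hr
    induction r with
    | zero => omega
    | succ r ih =>
      rcases Nat.eq_zero_or_pos r with h0 | h0
      · subst h0; simpa using hA
      · rw [pow_succ, ih h0, hA, Finset.sum_mul]
        apply Finset.sum_congr rfl
        intro i _
        rw [Finset.mul_sum]
        rw [Finset.sum_eq_single i]
        · rw [smul_mul_smul_comm, vmv_mul, hii i, one_smul, ← pow_succ]
        · intro j _ hji
          rw [smul_mul_smul_comm, vmv_mul, hij i j (fun h => hji h.symm), zero_smul, smul_zero]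
        · intro h; exact absurd (Finset.mem_univ i) h
  intro r hr
  rw [key r hr]
  ext a b
  simp only [Matrix.map_apply, Matrix.sum_apply, Matrix.smul_apply, Matrix.vecMulVec_apply,
    smul_eq_mul, hA]
  -- goal: ∑ i, μ i ^ r * (v i a * u i b) = (∑ i, μ i * (v i a * u i b)) ^ r
  have hprod : ∀ i j : Fin m, i ≠ j → v i a * u i b * (v j a * u j b) = 0 := by
    intro i j hij'
    have := congrFun (congrFun (hhad i j hij') a) b
    simpa [Matrix.hadamard_apply, Matrix.vecMulVec_apply, mul_comm, mul_assoc, mul_left_comm]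
      using this
  by_cases hex : ∃ i, v i a * u i b ≠ 0
  · obtain ⟨i0, hi0⟩ := hex
    have hone : v i0 a * u i0 b = 1 := by
      rcases hv i0 a with h1 | h1 <;> rcases hu i0 b with h2 | h2 <;>
        simp_all
    have hzero : ∀ j, j ≠ i0 → v j a * u j b = 0 := by
      intro j hj
      have := hprod i0 j (fun h => hj h.symm)
      rw [hone, one_mul] at this; exact this
    rw [Finset.sum_eq_single i0, Finset.sum_eq_single i0, hone, mul_one, mul_one]
    · intro j _ hj; rw [hzero j hj, mul_zero]
    · intro h; exact absurd (Finset.mem_univ i0) h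
    · intro j _ hj; rw [hzero j hj, mul_zero]
    · intro h; exact absurd (Finset.mem_univ i0) h
  · push_neg at hex
    have : ∀ c : F, ∑ i, c ^ 1 * μ i ^ 0 * 0 = 0 := by simp
    rw [Finset.sum_eq_zero, Finset.sum_eq_zero, zero_pow (by omega)]
    · intro j _; rw [hex j, mul_zero]
    · intro j _; rw [hex j, mul_zero]
end
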